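/- arXiv:1611.05401 — 3 statements merged into one kernel-verified Lean document; each statement's English description precedes it below -/
import Mathlib

section
/- Let n out of n distinct objects be sampled with replacement, and suppose d ≤ n/2. Then the probability that the sample contains fewer than d distinct elements is at most exp(−n(1/2 − e^{−1})²/2). -/
open Finset Real
open scoped ENNReal

open Finset Real
open scoped ENNReal

noncomputable def eavg {ι : Type*} [Fintype ι] (F : ι → ℝ) : ℝ :=
  (∑ x, F x) / (Fintype.card ι)

lemma exp_le_cosh_add {lam d : ℝ} (hd : |d| ≤ 1) :
    Real.exp (lam * d) ≤ Real.cosh lam + d * Real.sinh lam := by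
  have h1 : (1 + d) / 2 ≥ 0 := by cases abs_le.1 hd; linarith
  have h2 : (1 - d) / 2 ≥ 0 := by cases abs_le.1 hd; linarith
  have := convexOn_exp.2 (Set.mem_univ lam) (Set.mem_univ (-lam)) h1 h2 (by ring)
  rw [Real.cosh_eq, Real.sinh_eq]
  calc Real.exp (lam * d) = Real.exp ((1+d)/2 * lam + (1-d)/2 * (-lam)) := by ring_nf
    _ ≤ (1+d)/2 * Real.exp lam + (1-d)/2 * Real.exp (-lam) := this
    _ = (Real.exp lam + Real.exp (-lam))/2 + d * ((Real.exp lam - Real.exp (-lam))/2) := by ring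

lemma mcdiarmid_exp (n : ℕ) (hn : 0 < n) (lam : ℝ) :
    ∀ (m : ℕ) (F : (Fin m → Fin n) → ℝ),
      (∀ (ω : Fin m → Fin n) (i : Fin m) (a : Fin n),
          |F (Function.update ω i a) - F ω| ≤ 1) →
      eavg (fun ω => Real.exp (lam * (eavg F - F ω))) ≤ Real.exp (lam ^ 2 * m / 2) := by
  intro m
  induction m with
  | zero =>
    intro F _
    have h1 : (Fintype.card (Fin 0 → Fin n) : ℝ) = 1 := by
      simp [Fintype.card_fun]
    simp only [eavg, h1, div_one, Fintype.sum_unique, Nat.cast_zero]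
    simp
  | succ m ih =>
    intro F hF
    haveI : Nonempty (Fin n) := Fin.pos_iff_nonempty.mp hn
    have hn' : (0:ℝ) < n := by exact_mod_cast hn
    set G : (Fin m → Fin n) → ℝ := fun ω' => eavg (fun a : Fin n => F (Fin.cons a ω')) with hG
    have hsum : ∀ (h : (Fin (m+1) → Fin n) → ℝ),
        ∑ ω, h ω = ∑ a : Fin n, ∑ ω' : Fin m → Fin n, h (Fin.cons a ω') := by
      intro h
      rw [← (Fin.consEquiv (fun _ => Fin n)).sum_comp h, Fintype.sum_prod_type]
      rfl
    have hcard1 : (Fintype.card (Fin (m+1) → Fin n) : ℝ) = n * (Fintype.card (Fin m → Fin n) : ℝ) := by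
      simp [Fintype.card_fun, pow_succ, mul_comm]
    have hcardm : (0:ℝ) < (Fintype.card (Fin m → Fin n) : ℝ) := by
      have : 0 < Fintype.card (Fin m → Fin n) := Fintype.card_pos
      exact_mod_cast this
    have hGdef : ∀ ω', (n:ℝ) * G ω' = ∑ a : Fin n, F (Fin.cons a ω') := by
      intro ω'
      rw [hG]
      simp only [eavg, Fintype.card_fin]
      field_simp
    have hGavg : eavg G = eavg F := by
      simp only [eavg, hsum F, hcard1, Fintype.card_fin]
      rw [Finset.sum_comm]
      rw [div_eq_div_iff (by positivity) (by positivity)]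
      rw [Finset.sum_mul]
      have : ∀ ω' ∈ (Finset.univ : Finset (Fin m → Fin n)),
          (∑ a : Fin n, F (Fin.cons a ω')) = G ω' * (n:ℝ) := by
        intro ω' _
        rw [← hGdef ω']; ring
      rw [Finset.sum_congr rfl this, ← Finset.sum_mul, ← Finset.sum_mul]
      ring
    have hGbd : ∀ (ω' : Fin m → Fin n) (i : Fin m) (b : Fin n),
        |G (Function.update ω' i b) - G ω'| ≤ 1 := by
      intro ω' i b
      have key : (n:ℝ) * (G (Function.update ω' i b) - G ω')
          = ∑ a : Fin n, (F (Fin.cons a (Function.update ω' i b)) - F (Fin.cons a ω')) := by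
        rw [mul_sub, hGdef, hGdef, ← Finset.sum_sub_distrib]
      have habs : |(n:ℝ) * (G (Function.update ω' i b) - G ω')| ≤ n := by
        rw [key]
        calc |∑ a : Fin n, (F (Fin.cons a (Function.update ω' i b)) - F (Fin.cons a ω'))|
            ≤ ∑ a : Fin n, |F (Fin.cons a (Function.update ω' i b)) - F (Fin.cons a ω')| :=
              Finset.abs_sum_le_sum_abs _ _
          _ ≤ ∑ _a : Fin n, (1:ℝ) := by
              refine Finset.sum_le_sum fun a _ => ?_
              rw [Fin.cons_update]
              exact hF (Fin.cons a ω') i.succ b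
          _ = n := by simp
      rw [abs_mul, abs_of_pos hn'] at habs
      nlinarith [abs_nonneg (G (Function.update ω' i b) - G ω')]
    have hinner : ∀ ω' : Fin m → Fin n,
        ∑ a : Fin n, Real.exp (lam * (G ω' - F (Fin.cons a ω')))
          ≤ n * Real.exp (lam ^ 2 / 2) := by
      intro ω'
      have hD0 : ∑ a : Fin n, (G ω' - F (Fin.cons a ω')) = 0 := by
        rw [Finset.sum_sub_distrib, Finset.sum_const, Finset.card_univ, Fintype.card_fin,
          nsmul_eq_mul, hGdef]
        ring
      have hDb : ∀ a : Fin n, |G ω' - F (Fin.cons a ω')| ≤ 1 := by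
        intro a
        have key : (n:ℝ) * (G ω' - F (Fin.cons a ω'))
            = ∑ b : Fin n, (F (Fin.cons b ω') - F (Fin.cons a ω')) := by
          rw [mul_sub, hGdef, Finset.sum_sub_distrib, Finset.sum_const, Finset.card_univ,
            Fintype.card_fin, nsmul_eq_mul]
        have habs : |(n:ℝ) * (G ω' - F (Fin.cons a ω'))| ≤ n := by
          rw [key]
          calc |∑ b : Fin n, (F (Fin.cons b ω') - F (Fin.cons a ω'))|
              ≤ ∑ b : Fin n, |F (Fin.cons b ω') - F (Fin.cons a ω')| :=
                Finset.abs_sum_le_sum_abs _ _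
            _ ≤ ∑ _b : Fin n, (1:ℝ) := by
                refine Finset.sum_le_sum fun b _ => ?_
                have h1 := hF (Fin.cons a ω') 0 b
                rw [Fin.update_cons_zero] at h1
                exact h1
            _ = n := by simp
        rw [abs_mul, abs_of_pos hn'] at habs
        nlinarith [abs_nonneg (G ω' - F (Fin.cons a ω'))]
      calc ∑ a : Fin n, Real.exp (lam * (G ω' - F (Fin.cons a ω')))
          ≤ ∑ a : Fin n, (Real.cosh lam + (G ω' - F (Fin.cons a ω')) * Real.sinh lam) :=
            Finset.sum_le_sum fun a _ => exp_le_cosh_add (hDb a)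
        _ = n * Real.cosh lam
            + (∑ a : Fin n, (G ω' - F (Fin.cons a ω'))) * Real.sinh lam := by
            rw [Finset.sum_add_distrib, Finset.sum_const, Finset.card_univ, Fintype.card_fin,
              nsmul_eq_mul, ← Finset.sum_mul]
        _ = n * Real.cosh lam := by rw [hD0]; ring
        _ ≤ n * Real.exp (lam ^ 2 / 2) := by
            have := Real.cosh_le_exp_half_sq lam
            nlinarith
    have main : ∑ ω : Fin (m+1) → Fin n, Real.exp (lam * (eavg F - F ω))
        ≤ (n * Real.exp (lam ^ 2 / 2)) * ∑ ω' : Fin m → Fin n,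
            Real.exp (lam * (eavg F - G ω')) := by
      rw [hsum, Finset.sum_comm]
      calc ∑ ω' : Fin m → Fin n, ∑ a : Fin n, Real.exp (lam * (eavg F - F (Fin.cons a ω')))
          = ∑ ω' : Fin m → Fin n, Real.exp (lam * (eavg F - G ω'))
              * ∑ a : Fin n, Real.exp (lam * (G ω' - F (Fin.cons a ω'))) := by
            refine Finset.sum_congr rfl fun ω' _ => ?_
            rw [Finset.mul_sum]
            refine Finset.sum_congr rfl fun a _ => ?_
            rw [← Real.exp_add]
            ring_nf
        _ ≤ ∑ ω' : Fin m → Fin n, Real.exp (lam * (eavg F - G ω'))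
              * (n * Real.exp (lam ^ 2 / 2)) :=
            Finset.sum_le_sum fun ω' _ =>
              mul_le_mul_of_nonneg_left (hinner ω') (Real.exp_nonneg _)
        _ = (n * Real.exp (lam ^ 2 / 2)) * ∑ ω' : Fin m → Fin n,
              Real.exp (lam * (eavg F - G ω')) := by
            rw [← Finset.sum_mul]
            ring
    calc (eavg fun ω => Real.exp (lam * (eavg F - F ω)))
        = (∑ ω : Fin (m+1) → Fin n, Real.exp (lam * (eavg F - F ω)))
            / (n * (Fintype.card (Fin m → Fin n) : ℝ)) := by
          rw [eavg, hcard1]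
      _ ≤ ((n * Real.exp (lam ^ 2 / 2)) * ∑ ω' : Fin m → Fin n,
            Real.exp (lam * (eavg F - G ω'))) / (n * (Fintype.card (Fin m → Fin n) : ℝ)) := by
          have hpos : (0:ℝ) < n * (Fintype.card (Fin m → Fin n) : ℝ) := by positivity
          exact (div_le_div_iff_of_pos_right hpos).mpr main
      _ = Real.exp (lam ^ 2 / 2) * eavg (fun ω' => Real.exp (lam * (eavg G - G ω'))) := by
          rw [hGavg]
          simp only [eavg]
          rw [mul_assoc, mul_div_mul_left _ _ hn'.ne', mul_div_assoc]
      _ ≤ Real.exp (lam ^ 2 / 2) * Real.exp (lam ^ 2 * m / 2) :=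
          mul_le_mul_of_nonneg_left (ih G hGbd) (Real.exp_nonneg _)
      _ = Real.exp (lam ^ 2 * (m+1 : ℕ) / 2) := by
          rw [← Real.exp_add]
          push_cast
          ring_nf

lemma image_card_bdd_diff (n m : ℕ) (ω : Fin m → Fin n) (i : Fin m) (a : Fin n) :
    |((Finset.univ.image (Function.update ω i a)).card : ℝ)
      - ((Finset.univ.image ω).card : ℝ)| ≤ 1 := by
  have h1 : (Finset.univ.image (Function.update ω i a)) ⊆ insert a (Finset.univ.image ω) := by
    intro x hx
    obtain ⟨j, -, hj⟩ := Finset.mem_image.1 hx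
    by_cases hji : j = i
    · subst hji
      rw [Function.update_self] at hj
      exact hj ▸ Finset.mem_insert_self _ _
    · rw [Function.update_of_ne hji] at hj
      exact Finset.mem_insert_of_mem (Finset.mem_image.2 ⟨j, Finset.mem_univ j, hj⟩)
  have h2 : (Finset.univ.image ω) ⊆ insert (ω i) (Finset.univ.image (Function.update ω i a)) := by
    intro x hx
    obtain ⟨j, -, hj⟩ := Finset.mem_image.1 hx
    by_cases hji : j = i
    · subst hji; exact hj ▸ Finset.mem_insert_self _ _
    · refine Finset.mem_insert_of_mem (Finset.mem_image.2 ⟨j, Finset.mem_univ j, ?_⟩)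
      rw [Function.update_of_ne hji]; exact hj
  have c1 : (Finset.univ.image (Function.update ω i a)).card ≤ (Finset.univ.image ω).card + 1 :=
    le_trans (Finset.card_le_card h1) (Finset.card_insert_le _ _)
  have c2 : (Finset.univ.image ω).card ≤ (Finset.univ.image (Function.update ω i a)).card + 1 :=
    le_trans (Finset.card_le_card h2) (Finset.card_insert_le _ _)
  rw [abs_le]
  constructor
  · have := (Nat.cast_le (α := ℝ)).2 c2
    push_cast at this
    linarith
  · have := (Nat.cast_le (α := ℝ)).2 c1
    push_cast at this
    linarith

lemma mean_image (n : ℕ) (hn : 0 < n) :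
    (n:ℝ) - n * Real.exp (-1)
      ≤ eavg (fun ω : Fin n → Fin n => ((Finset.univ.image ω).card : ℝ)) := by
  haveI : Nonempty (Fin n) := Fin.pos_iff_nonempty.mp hn
  have hn' : (0:ℝ) < n := by exact_mod_cast hn
  have hcount : ∀ i : Fin n,
      (Finset.univ.filter fun ω : Fin n → Fin n => i ∉ Finset.univ.image ω).card
        = (n-1)^n := by
    intro i
    have hset : (Finset.univ.filter fun ω : Fin n → Fin n => i ∉ Finset.univ.image ω)
        = Fintype.piFinset (fun _ : Fin n => Finset.univ.erase i) := by
      ext ω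
      simp [Fintype.mem_piFinset, Finset.mem_erase, eq_comm]
    rw [hset, Fintype.card_piFinset]
    simp [Finset.card_erase_of_mem]
  have hcount2 : ∀ i : Fin n,
      ((Finset.univ.filter fun ω : Fin n → Fin n => i ∈ Finset.univ.image ω).card : ℝ)
        = (n:ℝ)^n - ((n-1 : ℕ):ℝ)^n := by
    intro i
    have := Finset.card_filter_add_card_filter_not
      (s := (Finset.univ : Finset (Fin n → Fin n)))
      (p := fun ω => i ∈ Finset.univ.image ω)
    rw [hcount i] at this
    have hcard : (Finset.univ : Finset (Fin n → Fin n)).card = n^n := by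
      simp [Finset.card_univ, Fintype.card_fun]
    rw [hcard] at this
    have : (Finset.univ.filter fun ω : Fin n → Fin n => i ∈ Finset.univ.image ω).card
        = n^n - (n-1)^n := by omega
    rw [this]
    have hle : (n-1)^n ≤ n^n := Nat.pow_le_pow_left (by omega) n
    push_cast [Nat.cast_sub hle]
    ring
  have hsum : ∑ ω : Fin n → Fin n, ((Finset.univ.image ω).card : ℝ)
      = (n:ℝ) * ((n:ℝ)^n - ((n-1 : ℕ):ℝ)^n) := by
    have step1 : ∀ ω : Fin n → Fin n, ((Finset.univ.image ω).card : ℝ)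
        = ∑ i : Fin n, (if i ∈ Finset.univ.image ω then (1:ℝ) else 0) := by
      intro ω
      rw [Finset.sum_boole, Finset.filter_mem_eq_inter, Finset.univ_inter]
    calc ∑ ω : Fin n → Fin n, ((Finset.univ.image ω).card : ℝ)
        = ∑ ω : Fin n → Fin n, ∑ i : Fin n,
            (if i ∈ Finset.univ.image ω then (1:ℝ) else 0) :=
          Finset.sum_congr rfl fun ω _ => step1 ω
      _ = ∑ i : Fin n, ∑ ω : Fin n → Fin n,
            (if i ∈ Finset.univ.image ω then (1:ℝ) else 0) := Finset.sum_comm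
      _ = ∑ i : Fin n, ((n:ℝ)^n - ((n-1 : ℕ):ℝ)^n) := by
          refine Finset.sum_congr rfl fun i _ => ?_
          rw [Finset.sum_boole, hcount2 i]
      _ = (n:ℝ) * ((n:ℝ)^n - ((n-1 : ℕ):ℝ)^n) := by
          rw [Finset.sum_const, Finset.card_univ, Fintype.card_fin, nsmul_eq_mul]
  have key : ((n-1 : ℕ):ℝ)^n ≤ Real.exp (-1) * (n:ℝ)^n := by
    have hc : ((n-1 : ℕ):ℝ) = (n:ℝ) - 1 := by
      push_cast [Nat.cast_sub hn]
      ring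
    have h1 : (0:ℝ) ≤ 1 - 1/n := by
      rw [sub_nonneg, div_le_one hn']
      exact_mod_cast hn
    have h2 : 1 - 1/(n:ℝ) ≤ Real.exp (-(1/n)) := by
      have := Real.add_one_le_exp (-(1/(n:ℝ)))
      linarith
    have h3 : (1 - 1/(n:ℝ))^n ≤ Real.exp (-(1/n)) ^ n :=
      pow_le_pow_left₀ h1 h2 n
    have h4 : Real.exp (-(1/(n:ℝ))) ^ n = Real.exp (-1) := by
      rw [← Real.exp_nat_mul]
      congr 1
      field_simp
    rw [h4] at h3
    have h5 : ((n-1 : ℕ):ℝ)^n = (1 - 1/(n:ℝ))^n * (n:ℝ)^n := by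
      rw [hc, ← mul_pow]
      congr 1
      field_simp
    rw [h5]
    exact mul_le_mul_of_nonneg_right h3 (by positivity)
  have hNpos : (0:ℝ) < (n:ℝ)^n := by positivity
  rw [eavg, hsum]
  have hcard : ((Fintype.card (Fin n → Fin n)) : ℝ) = (n:ℝ)^n := by
    simp [Fintype.card_fun]
  rw [hcard, le_div_iff₀ hNpos]
  nlinarith

lemma chernoff (n : ℕ) (hn : 0 < n) (m : ℕ) (hm : 0 < m) (F : (Fin m → Fin n) → ℝ)
    (hF : ∀ (ω : Fin m → Fin n) (i : Fin m) (a : Fin n),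
        |F (Function.update ω i a) - F ω| ≤ 1)
    (t : ℝ) (ht : 0 ≤ t) :
    ((Finset.univ.filter fun ω : Fin m → Fin n => F ω + t ≤ eavg F).card : ℝ)
      ≤ Real.exp (-(t^2/(2*m))) * (Fintype.card (Fin m → Fin n) : ℝ) := by
  haveI : Nonempty (Fin n) := Fin.pos_iff_nonempty.mp hn
  set lam : ℝ := t / m with hlam
  have hm' : (0:ℝ) < m := by exact_mod_cast hm
  have hlam0 : 0 ≤ lam := div_nonneg ht hm'.le
  have hmc := mcdiarmid_exp n hn lam m F hF
  have hcardpos : (0:ℝ) < (Fintype.card (Fin m → Fin n) : ℝ) := by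
    exact_mod_cast (Fintype.card_pos : 0 < Fintype.card (Fin m → Fin n))
  have hlower : ((Finset.univ.filter fun ω : Fin m → Fin n => F ω + t ≤ eavg F).card : ℝ)
        * Real.exp (lam * t)
      ≤ ∑ ω : Fin m → Fin n, Real.exp (lam * (eavg F - F ω)) := by
    calc ((Finset.univ.filter fun ω : Fin m → Fin n => F ω + t ≤ eavg F).card : ℝ)
          * Real.exp (lam * t)
        = ∑ _ω ∈ Finset.univ.filter fun ω : Fin m → Fin n => F ω + t ≤ eavg F,
            Real.exp (lam * t) := by
          rw [Finset.sum_const, nsmul_eq_mul]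
      _ ≤ ∑ ω ∈ Finset.univ.filter fun ω : Fin m → Fin n => F ω + t ≤ eavg F,
            Real.exp (lam * (eavg F - F ω)) := by
          refine Finset.sum_le_sum fun ω hω => ?_
          have hω' := (Finset.mem_filter.1 hω).2
          exact Real.exp_le_exp.2 (mul_le_mul_of_nonneg_left (by linarith) hlam0)
      _ ≤ ∑ ω : Fin m → Fin n, Real.exp (lam * (eavg F - F ω)) :=
          Finset.sum_le_sum_of_subset_of_nonneg (Finset.filter_subset _ _)
            (fun ω _ _ => Real.exp_nonneg _)
  have hupper : ∑ ω : Fin m → Fin n, Real.exp (lam * (eavg F - F ω))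
      ≤ Real.exp (lam ^ 2 * m / 2) * (Fintype.card (Fin m → Fin n) : ℝ) := by
    rw [eavg, div_le_iff₀ hcardpos] at hmc
    exact hmc
  have hfinal : lam ^ 2 * m / 2 - lam * t = -(t^2/(2*m)) := by
    rw [hlam]
    field_simp
    ring
  have hcomb := le_trans hlower hupper
  calc ((Finset.univ.filter fun ω : Fin m → Fin n => F ω + t ≤ eavg F).card : ℝ)
      ≤ Real.exp (lam ^ 2 * m / 2) * (Fintype.card (Fin m → Fin n) : ℝ)
          / Real.exp (lam * t) := by
        rw [le_div_iff₀ (Real.exp_pos _)]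
        exact hcomb
    _ = Real.exp (lam ^ 2 * m / 2 - lam * t) * (Fintype.card (Fin m → Fin n) : ℝ) := by
        rw [Real.exp_sub]
        ring
    _ = Real.exp (-(t^2/(2*m))) * (Fintype.card (Fin m → Fin n) : ℝ) := by rw [hfinal]




open MeasureTheory Finset

/-- when `n` objects are sampled with replacement from `n` distinct
objects (uniformly and independently) and `d ≤ n/2`, the probability that the
sample contains fewer than `d` distinct elements is at most
`exp(−n(1/2 − e⁻¹)²/2)`. -/
theorem sampling_with_replacement_few_distinct (n d : ℕ) [NeZero n]
    (hd : (d : ℝ) ≤ (n : ℝ) / 2) :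
    (PMF.uniformOfFintype (Fin n → Fin n)).toMeasure
        {f : Fin n → Fin n | (Finset.univ.image f).card < d} ≤
      ENNReal.ofReal
        (Real.exp (-((n : ℝ) * (1 / 2 - Real.exp (-1)) ^ 2 / 2))) := by
  have hn : 0 < n := Nat.pos_of_ne_zero (NeZero.ne n)
  haveI : Nonempty (Fin n) := Fin.pos_iff_nonempty.mp hn
  have hn' : (0:ℝ) < n := by exact_mod_cast hn
  set F : (Fin n → Fin n) → ℝ := fun ω => ((Finset.univ.image ω).card : ℝ) with hFdef
  set t : ℝ := n * (1/2 - Real.exp (-1)) with htdef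
  have hexp_half : Real.exp (-1) ≤ 1/2 := by
    have h2e : (2:ℝ) ≤ Real.exp 1 := by
      have := Real.add_one_le_exp 1
      linarith
    rw [Real.exp_neg]
    rw [inv_le_comm₀ (by positivity) (by norm_num)]
    simpa using h2e
  have ht0 : 0 ≤ t := by
    rw [htdef]
    have : (0:ℝ) ≤ 1/2 - Real.exp (-1) := by linarith
    positivity
  have hF : ∀ (ω : Fin n → Fin n) (i : Fin n) (a : Fin n),
      |F (Function.update ω i a) - F ω| ≤ 1 := fun ω i a => image_card_bdd_diff n n ω i a
  set A : Finset (Fin n → Fin n) :=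
    Finset.univ.filter fun ω : Fin n → Fin n => F ω + t ≤ eavg F with hA
  have hsub : {f : Fin n → Fin n | (Finset.univ.image f).card < d} ⊆ (A : Set (Fin n → Fin n)) := by
    intro f hf
    simp only [Set.mem_setOf_eq] at hf
    have h1 : F f < (d:ℝ) := by
      show ((Finset.univ.image f).card : ℝ) < (d:ℝ)
      exact_mod_cast hf
    have h2 : eavg F ≥ (n:ℝ) - n * Real.exp (-1) := mean_image n hn
    simp only [hA, Finset.coe_filter, Set.mem_setOf_eq, Finset.mem_univ, true_and]
    rw [htdef]
    nlinarith
  have hmono := measure_mono (μ := (PMF.uniformOfFintype (Fin n → Fin n)).toMeasure) hsub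
  rw [PMF.toMeasure_apply_finset] at hmono
  have hcardΩ : (0:ℝ) < ((Fintype.card (Fin n → Fin n)):ℝ) := by
    exact_mod_cast (Fintype.card_pos : 0 < Fintype.card (Fin n → Fin n))
  have hchern := chernoff n hn n hn F hF t ht0
  have hexp_eq : -(t^2/(2*(n:ℝ))) = -((n : ℝ) * (1 / 2 - Real.exp (-1)) ^ 2 / 2) := by
    rw [htdef]
    field_simp
  rw [hexp_eq] at hchern
  refine le_trans hmono ?_
  have hsum : ∑ x ∈ A, (PMF.uniformOfFintype (Fin n → Fin n)) x
      = (A.card : ℝ≥0∞) * ((Fintype.card (Fin n → Fin n) : ℝ≥0∞))⁻¹ := by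
    simp only [PMF.uniformOfFintype_apply]
    rw [Finset.sum_const, nsmul_eq_mul]
  rw [hsum]
  have hconv : (A.card : ℝ≥0∞) * ((Fintype.card (Fin n → Fin n) : ℝ≥0∞))⁻¹
      = ENNReal.ofReal ((A.card : ℝ) / ((Fintype.card (Fin n → Fin n)):ℝ)) := by
    rw [ENNReal.ofReal_div_of_pos hcardΩ, ENNReal.ofReal_natCast, ENNReal.ofReal_natCast,
      div_eq_mul_inv]
  rw [hconv]
  apply ENNReal.ofReal_le_ofReal
  rw [div_le_iff₀ hcardΩ]
  exact hchern
end

section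
/- Let X_1,…,X_n be i.i.d. real random variables with unique median μ, whose CDF F is differentiable with derivative ≥ M at all points within distance η of μ. Let X_(l) ≤ X_(u) be order statistics with l = ⌈n/2 − √((n/2)log(2/α))⌉ and u = ⌊n/2 + √((n/2)log(2/α))⌋. If 1/n + √(log(2/α)/(2n)) + √(log(2n)/(2n)) ≤ ηM, then with probability at least 1 − 1/n, both |X_(l) − μ| and |X_(u) − μ| are at most (1/M)(1/n + √(log(2/α)/(2n)) + √(log(2n)/(2n))). -/
open MeasureTheory ProbabilityTheory
open scoped ENNReal

section Helpers

open Real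

/-- Hoeffding's lemma for Bernoulli-type mgf. -/
lemma bernoulli_mgf_le {p : ℝ} (hp0 : 0 ≤ p) (hp1 : p ≤ 1) {s : ℝ} (hs : 0 ≤ s) :
    1 - p + p * exp s ≤ exp (s * p + s ^ 2 / 8) := by
  set f : ℝ → ℝ := fun t => 1 - p + p * exp t with hfdef
  have hf_pos : ∀ t, 0 < f t := by
    intro t
    rcases eq_or_lt_of_le hp0 with h | h
    · simp [hfdef, ← h]
    · have := mul_pos h (exp_pos t)
      simp only [hfdef]; linarith
  have hf' : ∀ t, HasDerivAt f (p * exp t) t := by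
    intro t
    exact ((Real.hasDerivAt_exp t).const_mul p).const_add (1 - p)
  set ρ : ℝ → ℝ := fun t => p * exp t / f t with hρdef
  have hρ0 : ∀ t, 0 ≤ ρ t := fun t =>
    div_nonneg (mul_nonneg hp0 (exp_pos t).le) (hf_pos t).le
  have hρ1 : ∀ t, ρ t ≤ 1 := by
    intro t
    rw [hρdef, div_le_one (hf_pos t)]
    simp only [hfdef]; linarith
  have hρ' : ∀ t, HasDerivAt ρ (ρ t * (1 - ρ t)) t := by
    intro t
    have hnum : HasDerivAt (fun t => p * exp t) (p * exp t) t :=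
      (Real.hasDerivAt_exp t).const_mul p
    have h := hnum.div (hf' t) (hf_pos t).ne'
    refine h.congr_deriv ?_
    have := (hf_pos t).ne'
    simp only [hρdef]
    field_simp
  have hanti : Antitone (fun t => ρ t - p - t / 4) := by
    have hd : ∀ t, HasDerivAt (fun t => ρ t - p - t / 4) (ρ t * (1 - ρ t) - 1 / 4) t := by
      intro t
      refine (((hρ' t).sub_const p).sub ((hasDerivAt_id t).div_const 4)).congr_deriv ?_
      ring
    refine antitone_of_deriv_nonpos (fun t => (hd t).differentiableAt) ?_
    intro t
    rw [(hd t).deriv]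
    nlinarith [sq_nonneg (2 * ρ t - 1), hρ0 t, hρ1 t]
  have hρzero : ρ 0 = p := by simp [hρdef, hfdef]
  have hg'le : ∀ t, 0 ≤ t → ρ t - (p + t / 4) ≤ 0 := by
    intro t ht
    have h := hanti ht
    simp only [hρzero] at h
    linarith [h]
  have hg : ∀ t, HasDerivAt (fun t => log (f t) - (t * p + t ^ 2 / 8))
      (ρ t - (p + t / 4)) t := by
    intro t
    have h1 : HasDerivAt (fun t => log (f t)) (ρ t) t := by
      have := (hf' t).log (hf_pos t).ne'
      simpa [hρdef] using this
    have h2 : HasDerivAt (fun t : ℝ => t * p + t ^ 2 / 8) (p + t / 4) t := by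
      have := ((hasDerivAt_id t).mul_const p).add ((hasDerivAt_pow 2 t).div_const 8)
      refine this.congr_deriv ?_
      simp
      ring
    exact h1.sub h2
  have hanti2 : AntitoneOn (fun t => log (f t) - (t * p + t ^ 2 / 8)) (Set.Ici 0) := by
    refine antitoneOn_of_deriv_nonpos (convex_Ici 0)
      (fun t _ => (hg t).differentiableAt.continuousAt.continuousWithinAt) ?_ ?_
    · intro t _
      exact (hg t).differentiableAt.differentiableWithinAt
    · intro t ht
      rw [interior_Ici] at ht
      rw [(hg t).deriv]
      exact hg'le t (le_of_lt ht)
  have hmain : log (f s) - (s * p + s ^ 2 / 8) ≤ 0 := by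
    have := hanti2 (Set.self_mem_Ici) (Set.mem_Ici.mpr hs) hs
    simp only [hfdef] at this ⊢
    simpa using this
  have h2 := Real.exp_le_exp.mpr (by linarith : log (f s) ≤ s * p + s ^ 2 / 8)
  rw [Real.exp_log (hf_pos s)] at h2
  exact h2

/-- Hoeffding upper-tail bound for a sum of i.i.d. `{0,1}`-valued random variables. -/
lemma binom_tail {Ω : Type*} [MeasurableSpace Ω] (μ : Measure Ω) [IsProbabilityMeasure μ]
    {n : ℕ} (hn : 0 < n) (Y : Fin n → Ω → ℝ)
    (hindep : iIndepFun Y μ)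
    (hY : ∀ i, Measurable (Y i))
    (hb : ∀ i ω, Y i ω = 0 ∨ Y i ω = 1)
    (p : ℝ) (hp : ∀ i, ∫ ω, Y i ω ∂μ = p)
    (k : ℝ) (hk : (n : ℝ) * p ≤ k) :
    (μ {ω | k ≤ ∑ i, Y i ω}).toReal ≤ Real.exp (-2 * (k - n * p) ^ 2 / n) := by
  have hnR : (0:ℝ) < n := Nat.cast_pos.mpr hn
  have hYint : ∀ i, Integrable (Y i) μ := by
    intro i
    refine Integrable.mono' (integrable_const 1) (hY i).aestronglyMeasurable ?_
    exact ae_of_all _ fun ω => by rcases hb i ω with h | h <;> simp [h]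
  have hp0 : 0 ≤ p := by
    rw [← hp ⟨0, hn⟩]
    exact integral_nonneg fun ω => by rcases hb ⟨0, hn⟩ ω with h | h <;> simp [h]
  have hp1 : p ≤ 1 := by
    rw [← hp ⟨0, hn⟩]
    calc ∫ ω, Y ⟨0, hn⟩ ω ∂μ ≤ ∫ _, (1:ℝ) ∂μ := by
          refine integral_mono (hYint _) (integrable_const 1) fun ω => ?_
          rcases hb ⟨0, hn⟩ ω with h | h <;> simp [h]
      _ = 1 := by simp
  set s : ℝ := 4 * (k - n * p) / n with hsdef
  have hs : 0 ≤ s := by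
    apply div_nonneg _ hnR.le
    linarith
  have hexpY : ∀ i (ω : Ω), exp (s * Y i ω) = 1 + (exp s - 1) * Y i ω := by
    intro i ω
    rcases hb i ω with h | h <;> simp [h]
  have hmgf : ∀ i, mgf (Y i) μ s = 1 - p + p * exp s := by
    intro i
    unfold mgf
    rw [integral_congr_ae (ae_of_all _ fun ω => hexpY i ω)]
    rw [integral_add (integrable_const 1) ((hYint i).const_mul _)]
    rw [integral_const, integral_const_mul, hp i]
    simp
    ring
  have hmeas_sum : Measurable (fun ω => ∑ i, Y i ω) :=
    Finset.measurable_sum _ fun i _ => hY i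
  have hsum_le : ∀ ω, ∑ i, Y i ω ≤ n := by
    intro ω
    calc ∑ i, Y i ω ≤ ∑ _i : Fin n, (1:ℝ) := by
          refine Finset.sum_le_sum fun i _ => ?_
          rcases hb i ω with h | h <;> simp [h]
      _ = n := by simp
  have hint_sum : Integrable (fun ω => exp (s * ∑ i, Y i ω)) μ := by
    refine Integrable.mono' (integrable_const (exp (s * n)))
      ((hmeas_sum.const_mul s).exp).aestronglyMeasurable ?_
    refine ae_of_all _ fun ω => ?_
    rw [Real.norm_eq_abs, abs_of_pos (exp_pos _), exp_le_exp]
    exact mul_le_mul_of_nonneg_left (hsum_le ω) hs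
  have hchern := measure_ge_le_exp_mul_mgf (X := fun ω => ∑ i, Y i ω) (μ := μ) k hs hint_sum
  have hmgfsum : mgf (fun ω => ∑ i, Y i ω) μ s = (1 - p + p * exp s) ^ n := by
    have h1 : (fun ω => ∑ i, Y i ω) = ∑ i, Y i := by funext ω; simp
    rw [h1, hindep.mgf_sum hY Finset.univ]
    simp [hmgf]
  have hbase_nonneg : 0 ≤ 1 - p + p * exp s := by
    have := mul_nonneg hp0 (exp_pos s).le
    linarith
  have hpow : (1 - p + p * exp s) ^ n ≤ exp (n * (s * p + s ^ 2 / 8)) := by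
    calc (1 - p + p * exp s) ^ n ≤ (exp (s * p + s ^ 2 / 8)) ^ n :=
          pow_le_pow_left₀ hbase_nonneg (bernoulli_mgf_le hp0 hp1 hs) n
      _ = exp (n * (s * p + s ^ 2 / 8)) := by
          rw [← Real.exp_nat_mul]
  calc (μ {ω | k ≤ ∑ i, Y i ω}).toReal ≤ exp (-s * k) * mgf (fun ω => ∑ i, Y i ω) μ s := hchern
    _ ≤ exp (-s * k) * exp (n * (s * p + s ^ 2 / 8)) := by
        rw [hmgfsum]
        exact mul_le_mul_of_nonneg_left hpow (exp_pos _).le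
    _ = exp (-s * k + n * (s * p + s ^ 2 / 8)) := by rw [← Real.exp_add]
    _ = exp (-2 * (k - n * p) ^ 2 / n) := by
        congr 1
        rw [hsdef]
        field_simp
        ring

lemma sorted_le_getElem {s : List ℝ} (hs : s.Pairwise (· ≤ ·)) {i j : ℕ}
    (hij : i ≤ j) (hj : j < s.length) : s[i]'(lt_of_le_of_lt hij hj) ≤ s[j] := by
  have := hs.rel_get_of_le (a := ⟨i, lt_of_le_of_lt hij hj⟩) (b := ⟨j, hj⟩) hij
  simpa using this

lemma sorted_getD_ge {s : List ℝ} (hs : s.Pairwise (· ≤ ·)) {k : ℕ} (hk : k < s.length) {t : ℝ}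
    (h : s.countP (fun y => decide (y < t)) ≤ k) : t ≤ s.getD k 0 := by
  by_contra hlt
  push_neg at hlt
  rw [List.getD_eq_getElem _ _ hk] at hlt
  have htake : List.countP (fun y => decide (y < t)) (s.take (k + 1)) = k + 1 := by
    rw [List.countP_eq_length.mpr, List.length_take]
    · omega
    · intro a ha
      rw [List.mem_take_iff_getElem] at ha
      obtain ⟨i, hi, rfl⟩ := ha
      have hik : i ≤ k := by omega
      exact decide_eq_true ((sorted_le_getElem hs hik hk).trans_lt hlt)
  have := List.countP_append (p := fun y => decide (y < t)) (l₁ := s.take (k + 1)) (l₂ := s.drop (k + 1))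
  rw [List.take_append_drop, htake] at this
  omega

lemma sorted_getD_le {s : List ℝ} (hs : s.Pairwise (· ≤ ·)) {k : ℕ} (hk : k < s.length) {t : ℝ}
    (h : s.countP (fun y => decide (t < y)) < s.length - k) : s.getD k 0 ≤ t := by
  by_contra hlt
  push_neg at hlt
  rw [List.getD_eq_getElem _ _ hk] at hlt
  have hdrop : List.countP (fun y => decide (t < y)) (s.drop k) = s.length - k := by
    rw [List.countP_eq_length.mpr, List.length_drop]
    intro a ha
    rw [List.mem_iff_getElem] at ha
    obtain ⟨i, hi, rfl⟩ := ha
    rw [List.getElem_drop]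
    have hle : k ≤ k + i := Nat.le_add_right _ _
    have hki : k + i < s.length := by
      rw [List.length_drop] at hi; omega
    exact decide_eq_true (lt_of_lt_of_le hlt (sorted_le_getElem hs hle hki))
  have := List.countP_append (p := fun y => decide (t < y)) (l₁ := s.take k) (l₂ := s.drop k)
  rw [List.take_append_drop, hdrop] at this
  omega

lemma countP_sort {n : ℕ} (x : Fin n → ℝ) (p : ℝ → Prop) [DecidablePred p] :
    ((Multiset.map x Finset.univ.val).sort (· ≤ ·)).countP (fun y => decide (p y)) =
      (Finset.univ.filter (fun i => p (x i))).card := by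
  have h1 : Multiset.countP p ↑(((Multiset.map x Finset.univ.val).sort (· ≤ ·))) =
      Multiset.countP p (Multiset.map x Finset.univ.val) := by
    rw [Multiset.sort_eq]
  rw [Multiset.coe_countP] at h1
  rw [h1, Multiset.countP_map]
  rfl

end Helpers

/-- The `l`-th order statistic (1-indexed) of a sample `x : Fin n → ℝ`. -/
noncomputable def orderStat {n : ℕ} (x : Fin n → ℝ) (l : ℕ) : ℝ :=
  ((Multiset.map x Finset.univ.val).sort (· ≤ ·)).getD (l - 1) 0

set_option maxHeartbeats 1600000 in
/-- concentration of the order statistics `X_(l)`, `X_(u)` around the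
unique median `m`, for i.i.d. data whose CDF has derivative at least `M` in an
`η`-neighborhood of `m`. -/
theorem order_statistics_near_median {Ω : Type*} [MeasurableSpace Ω]
    (μ : Measure Ω) [IsProbabilityMeasure μ] (n : ℕ) (hn : 0 < n)
    (X : Fin n → Ω → ℝ)
    (hmeas : ∀ i, Measurable (X i))
    (hindep : iIndepFun X μ)
    (hident : ∀ i, IdentDistrib (X i) (X ⟨0, hn⟩) μ μ)
    (F F' : ℝ → ℝ) (hF : ∀ t, F t = (μ {ω | X ⟨0, hn⟩ ω ≤ t}).toReal)
    (m η M α : ℝ) (hη : 0 < η) (hM : 0 < M) (hα : 0 < α) (hα1 : α < 1)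
    (hmed : F m = 1 / 2)
    (hderiv : ∀ x, |x - m| ≤ η → HasDerivAt F (F' x) x ∧ M ≤ F' x)
    (l u : ℕ)
    (hl : l = ⌈(n : ℝ) / 2 - Real.sqrt (((n : ℝ) / 2) * Real.log (2 / α))⌉₊)
    (hu : u = ⌊(n : ℝ) / 2 + Real.sqrt (((n : ℝ) / 2) * Real.log (2 / α))⌋₊)
    (hsmall : 1 / (n : ℝ) + Real.sqrt (Real.log (2 / α) / (2 * n)) +
        Real.sqrt (Real.log (2 * n) / (2 * n)) ≤ η * M) :
    1 - 1 / (n : ℝ≥0∞) ≤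
      μ {ω | |orderStat (fun i => X i ω) l - m| ≤
          (1 / M) * (1 / (n : ℝ) + Real.sqrt (Real.log (2 / α) / (2 * n)) +
            Real.sqrt (Real.log (2 * n) / (2 * n))) ∧
        |orderStat (fun i => X i ω) u - m| ≤
          (1 / M) * (1 / (n : ℝ) + Real.sqrt (Real.log (2 / α) / (2 * n)) +
            Real.sqrt (Real.log (2 * n) / (2 * n)))} := by
  classical
  have hnR : (0:ℝ) < n := Nat.cast_pos.mpr hn
  set β := Real.sqrt (Real.log (2 / α) / (2 * n)) with hβdef
  set δ := Real.sqrt (Real.log (2 * n) / (2 * n)) with hδdef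
  set C : ℝ := 1 / (n : ℝ) + β + δ with hCdef
  set ε : ℝ := (1 / M) * C with hεdef
  have hβ0 : 0 ≤ β := Real.sqrt_nonneg _
  have hδ0 : 0 ≤ δ := Real.sqrt_nonneg _
  have hC0 : 0 < C := by
    have : 0 < 1 / (n:ℝ) := by positivity
    simp only [hCdef]; linarith
  have hε0 : 0 < ε := by
    rw [hεdef]; positivity
  -- facts about F
  have hF1 : ∀ t, F t ≤ 1 := by
    intro t
    rw [hF t]
    have h := prob_le_one (μ := μ) (s := {ω | X ⟨0, hn⟩ ω ≤ t})
    have := (ENNReal.toReal_le_toReal (measure_ne_top μ _) ENNReal.one_ne_top).mpr h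
    simpa using this
  have hF0 : ∀ t, 0 ≤ F t := fun t => by rw [hF t]; exact ENNReal.toReal_nonneg
  have hIccabs : ∀ t ∈ Set.Icc (m - η) (m + η), |t - m| ≤ η := by
    intro t ht
    rw [Set.mem_Icc] at ht
    rw [abs_le]
    constructor <;> linarith [ht.1, ht.2]
  have key : ∀ a ∈ Set.Icc (m - η) (m + η), ∀ b ∈ Set.Icc (m - η) (m + η), a ≤ b →
      M * (b - a) ≤ F b - F a := by
    refine (convex_Icc _ _).mul_sub_le_image_sub_of_le_deriv
      (fun t ht => (hderiv t (hIccabs t ht)).1.continuousAt.continuousWithinAt)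
      (fun t ht => (hderiv t (hIccabs t (interior_subset ht))).1.differentiableAt.differentiableWithinAt)
      (fun t ht => ?_)
    rw [(hderiv t (hIccabs t (interior_subset ht))).1.deriv]
    exact (hderiv t (hIccabs t (interior_subset ht))).2
  have hmem1 : m - η ∈ Set.Icc (m - η) (m + η) := by
    rw [Set.mem_Icc]; constructor <;> linarith
  have hmem2 : m + η ∈ Set.Icc (m - η) (m + η) := by
    rw [Set.mem_Icc]; constructor <;> linarith
  have hηM : η * M ≤ 1 / 2 := by
    have h := key (m - η) hmem1 (m + η) hmem2 (by linarith)
    have h1 := hF1 (m + η)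
    have h2 := hF0 (m - η)
    nlinarith
  have hCηM : C ≤ η * M := hsmall
  have hεη : ε ≤ η := by
    rw [hεdef]
    rw [div_mul_eq_mul_div, one_mul, div_le_iff₀ hM]
    linarith [hCηM]
  have hMε : M * ε = C := by
    rw [hεdef]
    field_simp
  have hmema : m - ε ∈ Set.Icc (m - η) (m + η) := by
    rw [Set.mem_Icc]; constructor <;> linarith
  have hmemb : m + ε ∈ Set.Icc (m - η) (m + η) := by
    rw [Set.mem_Icc]; constructor <;> linarith
  have hmemm : m ∈ Set.Icc (m - η) (m + η) := by
    rw [Set.mem_Icc]; constructor <;> linarith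
  have hFb : 1 / 2 + C ≤ F (m + ε) := by
    have h := key m hmemm (m + ε) hmemb (by linarith)
    rw [hmed, show m + ε - m = ε by ring, hMε] at h
    linarith
  have hFa : F (m - ε) ≤ 1 / 2 - C := by
    have h := key (m - ε) hmema m hmemm (by linarith)
    rw [hmed, show m - (m - ε) = ε by ring, hMε] at h
    linarith
  -- numeric facts about l and u
  have hChalf : C ≤ 1 / 2 := le_trans hCηM hηM
  have h1nhalf : 1 / (n:ℝ) ≤ 1 / 2 := by
    simp only [hCdef] at hChalf; linarith
  have hn2 : (2:ℝ) ≤ (n:ℝ) := by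
    have := (div_le_div_iff₀ hnR two_pos).mp h1nhalf
    linarith
  have hβhalf : β < 1 / 2 := by
    have h1n : 0 < 1 / (n:ℝ) := by positivity
    simp only [hCdef] at hChalf
    linarith
  have hnβ : (n:ℝ) * β = Real.sqrt (((n:ℝ) / 2) * Real.log (2 / α)) := by
    have h1 : (n:ℝ) * β = Real.sqrt (((n:ℝ)^2) * (Real.log (2 / α) / (2 * n))) := by
      rw [Real.sqrt_mul (sq_nonneg _), Real.sqrt_sq hnR.le, hβdef]
    rw [h1]
    congr 1
    field_simp
  rw [← hnβ] at hl hu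
  have hl_lb : (n:ℝ) / 2 - (n:ℝ) * β ≤ (l:ℝ) := by
    rw [hl]
    exact Nat.le_ceil _
  have hl1 : 1 ≤ l := by
    rw [hl]
    refine Nat.ceil_pos.mpr ?_
    have : (n:ℝ) * β < (n:ℝ) * (1/2) := by
      exact mul_lt_mul_of_pos_left hβhalf hnR
    nlinarith
  have hln : l ≤ n := by
    rw [hl]
    refine Nat.ceil_le.mpr ?_
    have : 0 ≤ (n:ℝ) * β := mul_nonneg hnR.le hβ0
    linarith
  have hnβhalf : (1:ℝ) / 2 ≤ (n:ℝ) * β := by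
    rw [hnβ]
    have hlog2 : (0.6931471803:ℝ) < Real.log 2 := Real.log_two_gt_d9
    have hlogle : Real.log 2 ≤ Real.log (2 / α) := by
      refine Real.log_le_log two_pos ?_
      rw [le_div_iff₀ hα]
      linarith
    have h4 : ((1:ℝ)/2)^2 ≤ ((n:ℝ) / 2) * Real.log (2 / α) := by
      have h5 : (1:ℝ) ≤ (n:ℝ)/2 := by linarith
      have h6 : (0:ℝ) ≤ Real.log (2/α) := by linarith
      have h7 : 1 * Real.log (2/α) ≤ ((n:ℝ)/2) * Real.log (2/α) :=
        mul_le_mul_of_nonneg_right h5 h6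
      linarith
    calc (1:ℝ)/2 = Real.sqrt (((1:ℝ)/2)^2) := (Real.sqrt_sq (by norm_num)).symm
      _ ≤ _ := Real.sqrt_le_sqrt h4
  have hu_ub : (u:ℝ) ≤ (n:ℝ) / 2 + (n:ℝ) * β := by
    rw [hu]
    exact Nat.floor_le (by positivity)
  have hun : u ≤ n := by
    rw [hu]
    have h1 : (n:ℝ) / 2 + (n:ℝ) * β ≤ (n:ℝ) := by
      nlinarith [hβhalf, hnR]
    calc ⌊(n:ℝ) / 2 + (n:ℝ) * β⌋₊ ≤ ⌊(n:ℝ)⌋₊ := Nat.floor_le_floor h1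
      _ = n := Nat.floor_natCast n
  have hlu : l ≤ u := by
    rw [hu]
    refine Nat.le_floor ?_
    have hx0 : (0:ℝ) ≤ (n:ℝ) / 2 - (n:ℝ) * β := by nlinarith [hβhalf]
    have h2 := Nat.ceil_lt_add_one hx0
    rw [hl]
    push_cast
    linarith [hnβhalf, h2]
  -- indicator random variables
  set a : ℝ := m - ε with hadef
  set b : ℝ := m + ε with hbdef
  set φ : ℝ → ℝ := (Set.Iio a).indicator (fun _ => (1:ℝ)) with hφdef
  set ψ : ℝ → ℝ := (Set.Ioi b).indicator (fun _ => (1:ℝ)) with hψdef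
  have hφm : Measurable φ := measurable_const.indicator measurableSet_Iio
  have hψm : Measurable ψ := measurable_const.indicator measurableSet_Ioi
  set Y : Fin n → Ω → ℝ := fun i => φ ∘ X i with hYdef
  set W : Fin n → Ω → ℝ := fun i => ψ ∘ X i with hWdef
  have hYindep : iIndepFun Y μ := hindep.comp (fun _ => φ) (fun _ => hφm)
  have hWindep : iIndepFun W μ := hindep.comp (fun _ => ψ) (fun _ => hψm)
  have hYmeas : ∀ i, Measurable (Y i) := fun i => hφm.comp (hmeas i)
  have hWmeas : ∀ i, Measurable (W i) := fun i => hψm.comp (hmeas i)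
  have hYb : ∀ i ω, Y i ω = 0 ∨ Y i ω = 1 := by
    intro i ω
    by_cases h : X i ω ∈ Set.Iio a
    · right; simp [hYdef, hφdef, Set.indicator_apply, h]
    · left; simp [hYdef, hφdef, Set.indicator_apply, h]
  have hWb : ∀ i ω, W i ω = 0 ∨ W i ω = 1 := by
    intro i ω
    by_cases h : X i ω ∈ Set.Ioi b
    · right; simp [hWdef, hψdef, Set.indicator_apply, h]
    · left; simp [hWdef, hψdef, Set.indicator_apply, h]
  set p₁ : ℝ := (μ (X ⟨0, hn⟩ ⁻¹' Set.Iio a)).toReal with hp₁def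
  set p₂ : ℝ := (μ (X ⟨0, hn⟩ ⁻¹' Set.Ioi b)).toReal with hp₂def
  have hYint_eq : ∀ i, ∫ ω, Y i ω ∂μ = p₁ := by
    intro i
    have h1 : (fun ω => Y i ω) = Set.indicator (X i ⁻¹' Set.Iio a) (fun _ => (1:ℝ)) := by
      funext ω
      simp [hYdef, hφdef, Set.indicator_apply, Set.mem_preimage]
    rw [h1, integral_indicator_const (1:ℝ) ((hmeas i) measurableSet_Iio), measureReal_def,
      (hident i).measure_mem_eq measurableSet_Iio]
    simp [hp₁def]
  have hWint_eq : ∀ i, ∫ ω, W i ω ∂μ = p₂ := by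
    intro i
    have h1 : (fun ω => W i ω) = Set.indicator (X i ⁻¹' Set.Ioi b) (fun _ => (1:ℝ)) := by
      funext ω
      simp [hWdef, hψdef, Set.indicator_apply, Set.mem_preimage]
    rw [h1, integral_indicator_const (1:ℝ) ((hmeas i) measurableSet_Ioi), measureReal_def,
      (hident i).measure_mem_eq measurableSet_Ioi]
    simp [hp₂def]
  have hp₁le : p₁ ≤ 1 / 2 - C := by
    have hsub : (X ⟨0, hn⟩ ⁻¹' Set.Iio a) ⊆ {ω | X ⟨0, hn⟩ ω ≤ a} := by
      intro ω h
      simp only [Set.mem_preimage, Set.mem_Iio] at h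
      exact le_of_lt h
    have h1 : p₁ ≤ F a := by
      rw [hF a]
      exact ENNReal.toReal_mono (measure_ne_top μ _) (measure_mono hsub)
    exact le_trans h1 hFa
  have hp₂le : p₂ ≤ 1 / 2 - C := by
    have hcompl : X ⟨0, hn⟩ ⁻¹' Set.Ioi b = {ω | X ⟨0, hn⟩ ω ≤ b}ᶜ := by
      ext ω
      simp [Set.mem_preimage, Set.mem_Ioi, not_le]
    have hms : MeasurableSet {ω | X ⟨0, hn⟩ ω ≤ b} := by
      have : {ω | X ⟨0, hn⟩ ω ≤ b} = X ⟨0, hn⟩ ⁻¹' Set.Iic b := rfl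
      rw [this]
      exact (hmeas _) measurableSet_Iic
    have h1 : p₂ = 1 - F b := by
      rw [hp₂def, hcompl, prob_compl_eq_one_sub hms,
        ENNReal.toReal_sub_of_le prob_le_one ENNReal.one_ne_top, ENNReal.toReal_one, hF b]
    rw [h1]
    linarith [hFb]
  have hnC : (n:ℝ) * C = 1 + (n:ℝ) * β + (n:ℝ) * δ := by
    rw [hCdef]
    field_simp
  clear_value β δ C ε
  -- tail bound for the lower order statistic event
  have hgapA : 1 + (n:ℝ) * δ ≤ (l:ℝ) - (n:ℝ) * p₁ := by
    have h1 : (n:ℝ) * p₁ ≤ (n:ℝ) * (1/2 - C) := by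
      exact mul_le_mul_of_nonneg_left hp₁le hnR.le
    have h2 : (n:ℝ) * (1/2 - C) = (n:ℝ)/2 - (n:ℝ) * C := by ring
    linarith [hl_lb, h1, h2, hnC]
  have hgapB : 1 + (n:ℝ) * δ ≤ ((n:ℝ) - (u:ℝ) + 1) - (n:ℝ) * p₂ := by
    have h1 : (n:ℝ) * p₂ ≤ (n:ℝ) * (1/2 - C) := by
      exact mul_le_mul_of_nonneg_left hp₂le hnR.le
    have h2 : (n:ℝ) * (1/2 - C) = (n:ℝ)/2 - (n:ℝ) * C := by ring
    linarith [hu_ub, h1, h2, hnC]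
  have hδsq : 2 * (n:ℝ) * δ^2 = Real.log (2 * n) := by
    rw [hδdef, Real.sq_sqrt]
    · field_simp
    · apply div_nonneg _ (by positivity)
      apply Real.log_nonneg
      nlinarith
  have hexp_le : ∀ t : ℝ, 1 + (n:ℝ) * δ ≤ t → Real.exp (-2 * t^2 / n) ≤ 1 / (2 * n) := by
    intro t ht
    have hnδ0 : 0 ≤ (n:ℝ) * δ := by positivity
    have ht2 : ((n:ℝ) * δ)^2 ≤ t^2 := by nlinarith [hnδ0, ht]
    have h1 : Real.log (2 * n) ≤ 2 * t^2 / n := by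
      rw [le_div_iff₀ hnR]
      nlinarith [hδsq, ht2]
    have h2 : -2 * t^2 / n ≤ - Real.log (2 * n) := by
      rw [neg_mul, neg_div]
      linarith
    calc Real.exp (-2 * t^2 / n) ≤ Real.exp (- Real.log (2 * n)) := Real.exp_le_exp.mpr h2
      _ = 1 / (2 * n) := by
          rw [Real.exp_neg, Real.exp_log (by positivity)]
          rw [one_div]
  have hkA : (n:ℝ) * p₁ ≤ (l:ℝ) := by nlinarith [hgapA, hδ0, hnR]
  have hkB : (n:ℝ) * p₂ ≤ (n:ℝ) - (u:ℝ) + 1 := by nlinarith [hgapB, hδ0, hnR]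
  have hA := binom_tail μ hn Y hYindep hYmeas hYb p₁ hYint_eq (l:ℝ) hkA
  have hB := binom_tail μ hn W hWindep hWmeas hWb p₂ hWint_eq ((n:ℝ) - (u:ℝ) + 1) hkB
  have hAbound : (μ {ω | (l:ℝ) ≤ ∑ i, Y i ω}).toReal ≤ 1 / (2 * n) :=
    le_trans hA (hexp_le _ hgapA)
  have hBbound : (μ {ω | ((n:ℝ) - (u:ℝ) + 1) ≤ ∑ i, W i ω}).toReal ≤ 1 / (2 * n) :=
    le_trans hB (hexp_le _ hgapB)
  set A : Set Ω := {ω | (l:ℝ) ≤ ∑ i, Y i ω} with hAdef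
  set B : Set Ω := {ω | ((n:ℝ) - (u:ℝ) + 1) ≤ ∑ i, W i ω} with hBdef
  have hAmeas : MeasurableSet A :=
    measurableSet_le measurable_const (Finset.measurable_sum _ fun i _ => hYmeas i)
  have hBmeas : MeasurableSet B :=
    measurableSet_le measurable_const (Finset.measurable_sum _ fun i _ => hWmeas i)
  -- the deterministic inclusion
  have hincl : (A ∪ B)ᶜ ⊆ {ω | |orderStat (fun i => X i ω) l - m| ≤ ε ∧
      |orderStat (fun i => X i ω) u - m| ≤ ε} := by
    intro ω hω
    rw [Set.mem_compl_iff, Set.mem_union, not_or] at hω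
    obtain ⟨hω1, hω2⟩ := hω
    rw [hAdef, Set.mem_setOf_eq, not_le] at hω1
    rw [hBdef, Set.mem_setOf_eq, not_le] at hω2
    set x : Fin n → ℝ := fun i => X i ω with hxdef
    have hsumY : ∑ i, Y i ω = ((Finset.univ.filter (fun i => x i < a)).card : ℝ) := by
      rw [← Finset.sum_boole]
      refine Finset.sum_congr rfl fun i _ => ?_
      by_cases h : x i < a
      · simp [hYdef, hφdef, Set.indicator_apply, Set.mem_Iio, h, hxdef]
      · simp [hYdef, hφdef, Set.indicator_apply, Set.mem_Iio, h, hxdef]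
    have hsumW : ∑ i, W i ω = ((Finset.univ.filter (fun i => b < x i)).card : ℝ) := by
      rw [← Finset.sum_boole]
      refine Finset.sum_congr rfl fun i _ => ?_
      by_cases h : b < x i
      · simp [hWdef, hψdef, Set.indicator_apply, Set.mem_Ioi, h, hxdef]
      · simp [hWdef, hψdef, Set.indicator_apply, Set.mem_Ioi, h, hxdef]
    rw [hsumY] at hω1
    rw [hsumW] at hω2
    have hcard₁ : (Finset.univ.filter (fun i => x i < a)).card < l := by
      exact_mod_cast hω1
    have hcard₂ : (Finset.univ.filter (fun i => b < x i)).card < n - u + 1 := by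
      have h1 : ((Finset.univ.filter (fun i => b < x i)).card : ℝ) < ((n - u + 1 : ℕ) : ℝ) := by
        push_cast [Nat.cast_sub hun]
        linarith [hω2]
      exact_mod_cast h1
    set s : List ℝ := (Multiset.map x Finset.univ.val).sort (· ≤ ·) with hsdef
    have hsorted : s.Pairwise (· ≤ ·) := Multiset.pairwise_sort _ _
    have hslen : s.length = n := by
      rw [hsdef, Multiset.length_sort, Multiset.card_map]
      simp
    have hos_l : orderStat x l = s.getD (l - 1) 0 := rfl
    have hos_u : orderStat x u = s.getD (u - 1) 0 := rfl
    have hcount₁ : s.countP (fun y => decide (y < a)) ≤ l - 1 := by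
      rw [hsdef, countP_sort x (fun y => y < a)]
      omega
    have hcount₂ : s.countP (fun y => decide (b < y)) < s.length - (u - 1) := by
      rw [hsdef, countP_sort x (fun y => b < y)]
      rw [hsdef] at hslen
      omega
    have hl1' : l - 1 < s.length := by omega
    have hu1' : u - 1 < s.length := by omega
    have h1 : a ≤ orderStat x l := by
      rw [hos_l]
      exact sorted_getD_ge hsorted hl1' hcount₁
    have h2 : orderStat x u ≤ b := by
      rw [hos_u]
      exact sorted_getD_le hsorted hu1' hcount₂
    have h3 : orderStat x l ≤ orderStat x u := by
      rw [hos_l, hos_u, List.getD_eq_getElem _ _ hl1', List.getD_eq_getElem _ _ hu1']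
      exact sorted_le_getElem hsorted (by omega) hu1'
    constructor
    · rw [abs_le]
      constructor
      · simp only [hadef] at h1; linarith
      · simp only [hbdef] at h2; linarith
    · rw [abs_le]
      constructor
      · simp only [hadef] at h1; linarith
      · simp only [hbdef] at h2; linarith
  -- final measure computation
  have hABle : μ (A ∪ B) ≤ 1 / (n : ℝ≥0∞) := by
    have hA' : μ A ≤ ENNReal.ofReal (1 / (2 * n)) := by
      rw [ENNReal.le_ofReal_iff_toReal_le (measure_ne_top μ _) (by positivity)]
      exact hAbound
    have hB' : μ B ≤ ENNReal.ofReal (1 / (2 * n)) := by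
      rw [ENNReal.le_ofReal_iff_toReal_le (measure_ne_top μ _) (by positivity)]
      exact hBbound
    calc μ (A ∪ B) ≤ μ A + μ B := measure_union_le A B
      _ ≤ ENNReal.ofReal (1 / (2 * n)) + ENNReal.ofReal (1 / (2 * n)) := add_le_add hA' hB'
      _ = ENNReal.ofReal (1 / (n:ℝ)) := by
          rw [← ENNReal.ofReal_add (by positivity) (by positivity)]
          congr 1
          rw [← add_div, show (1:ℝ) + 1 = 2 by norm_num,
            div_eq_div_iff (by positivity) (by positivity)]
          ring
      _ = 1 / (n : ℝ≥0∞) := by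
          rw [ENNReal.ofReal_div_of_pos hnR, ENNReal.ofReal_one, ENNReal.ofReal_natCast]
  calc 1 - 1 / (n : ℝ≥0∞) ≤ 1 - μ (A ∪ B) := tsub_le_tsub_left hABle 1
    _ = μ ((A ∪ B)ᶜ) := (prob_compl_eq_one_sub (hAmeas.union hBmeas)).symm
    _ ≤ _ := measure_mono hincl
end

section
/- Let X_1,…,X_n be independent mean-zero random vectors in R^p with ‖X_i‖ ≤ K√p almost surely and E‖X_i‖² ≤ Up. Then with probability at least 1 − 1/n, ‖(1/n)Σ_i X_i‖ ≤ √(Up/n) + √(8Up log n / n) + (4K√p log n)/(3n). -/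
open MeasureTheory ProbabilityTheory Real
open scoped ENNReal

lemma exp_quad_small {u : ℝ} (h0 : 0 ≤ u) (h1 : u ≤ 1) :
    Real.exp u ≤ 1 + u + u ^ 2 := by
  have h := Real.exp_bound' h0 h1 (n := 3) (by norm_num)
  have he : (∑ m ∈ Finset.range 3, u ^ m / (m.factorial : ℝ))
      = 1 + u + u ^ 2 / 2 := by
    simp [Finset.sum_range_succ, Nat.factorial]
  rw [he] at h
  have : ((3:ℕ).factorial : ℝ) = 6 := by norm_num [Nat.factorial]
  rw [this] at h
  nlinarith [pow_le_pow_left₀ h0 h1 3, sq_nonneg u, pow_nonneg h0 3]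

lemma exp_quad {x : ℝ} (hx : x ≤ 2) : Real.exp x ≤ 1 + x + 2 * x ^ 2 := by
  rcases le_or_gt x 0 with h | h
  · have h1 : 1 - x ≤ Real.exp (-x) := by
      have := Real.add_one_le_exp (-x); linarith
    have hpos : (0:ℝ) < 1 - x := by linarith
    have h2 : Real.exp x ≤ 1 / (1 - x) := by
      rw [le_div_iff₀ hpos]
      calc Real.exp x * (1 - x) ≤ Real.exp x * Real.exp (-x) := by
            exact mul_le_mul_of_nonneg_left h1 (Real.exp_nonneg x)
        _ = 1 := by rw [← Real.exp_add]; simp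
    have h3 : 1 / (1 - x) ≤ 1 + x + 2 * x ^ 2 := by
      rw [div_le_iff₀ hpos]
      nlinarith [sq_nonneg x]
    linarith
  · have h2 : Real.exp (x / 2) ≤ 1 + x / 2 + (x / 2) ^ 2 :=
      exp_quad_small (by linarith) (by linarith)
    have h3 : Real.exp x = Real.exp (x / 2) * Real.exp (x / 2) := by
      rw [← Real.exp_add]; ring_nf
    have hp : (0:ℝ) ≤ 1 + x / 2 + (x / 2) ^ 2 := by nlinarith
    have := mul_le_mul h2 h2 (Real.exp_nonneg _) hp
    rw [← h3] at this
    nlinarith [sq_nonneg x, h.le, mul_nonneg (sq_nonneg x) (sub_nonneg.mpr hx)]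

section Helpers

variable {α : Type*} [MeasurableSpace α] {ν : Measure α}

/-- Integrability from an a.e. bound, real valued. -/
lemma integrable_of_ae_bound [IsFiniteMeasure ν] {f : α → ℝ} (C : ℝ)
    (hm : AEStronglyMeasurable f ν) (h : ∀ᵐ x ∂ν, |f x| ≤ C) : Integrable f ν :=
  ⟨hm, HasFiniteIntegral.of_bounded (C := C) (by simpa [Real.norm_eq_abs] using h)⟩

/-- Integrability from an a.e. bound, general norm. -/
lemma integrable_of_ae_bound' [IsFiniteMeasure ν] {G : Type*} [NormedAddCommGroup G]
    {f : α → G} (C : ℝ)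
    (hm : AEStronglyMeasurable f ν) (h : ∀ᵐ x ∂ν, ‖f x‖ ≤ C) : Integrable f ν :=
  ⟨hm, HasFiniteIntegral.of_bounded (C := C) h⟩

lemma expand_integral_quad [IsProbabilityMeasure ν] {g : α → ℝ} (c : ℝ)
    (hg : Integrable g ν) (hg2 : Integrable (fun x => (g x) ^ 2) ν) :
    ∫ x, (g x - c) ^ 2 ∂ν = (∫ x, (g x) ^ 2 ∂ν) - 2 * c * (∫ x, g x ∂ν) + c ^ 2 := by
  have h1 : Integrable (fun x => (g x) ^ 2 - 2 * c * g x) ν := hg2.sub (hg.const_mul _)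
  have e0 : ∀ x, (g x - c) ^ 2 = ((g x) ^ 2 - 2 * c * g x) + c ^ 2 := fun x => by ring
  rw [integral_congr_ae (Filter.Eventually.of_forall e0), integral_add h1 (integrable_const _),
    integral_sub hg2 (hg.const_mul _), integral_const_mul, integral_const]
  simp [measure_univ]

lemma integrable_sub_sq [IsProbabilityMeasure ν] {g : α → ℝ} (c : ℝ)
    (hg : Integrable g ν) (hg2 : Integrable (fun x => (g x) ^ 2) ν) :
    Integrable (fun x => (g x - c) ^ 2) ν := by
  have e0 : ∀ x, (g x - c) ^ 2 = ((g x) ^ 2 - 2 * c * g x) + c ^ 2 := fun x => by ring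
  have h1 : Integrable (fun x => ((g x) ^ 2 - 2 * c * g x) + c ^ 2) ν :=
    (hg2.sub (hg.const_mul _)).add (integrable_const _)
  exact h1.congr (Filter.Eventually.of_forall fun x => (e0 x).symm)

/-- `(∫ g)² ≤ ∫ g²` on a probability space. -/
lemma sq_integral_le [IsProbabilityMeasure ν] {g : α → ℝ}
    (hg : Integrable g ν) (hg2 : Integrable (fun x => (g x) ^ 2) ν) :
    (∫ x, g x ∂ν) ^ 2 ≤ ∫ x, (g x) ^ 2 ∂ν := by
  set m := ∫ x, g x ∂ν with hm
  have h0 : 0 ≤ ∫ x, (g x - m) ^ 2 ∂ν := integral_nonneg fun x => sq_nonneg _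
  rw [expand_integral_quad m hg hg2] at h0
  nlinarith [h0]

/-- The mean minimizes the quadratic deviation. -/
lemma integral_sq_sub_mean_le [IsProbabilityMeasure ν] {g : α → ℝ} (c : ℝ)
    (hg : Integrable g ν) (hg2 : Integrable (fun x => (g x) ^ 2) ν) :
    ∫ x, (g x - ∫ y, g y ∂ν) ^ 2 ∂ν ≤ ∫ x, (g x - c) ^ 2 ∂ν := by
  set m := ∫ y, g y ∂ν with hm
  rw [expand_integral_quad m hg hg2, expand_integral_quad c hg hg2]
  nlinarith [sq_nonneg (m - c)]

/-- One-step MGF bound for a bounded centered scalar function. -/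
lemma mgf_step [IsProbabilityMeasure ν] {g : α → ℝ} {B v l : ℝ}
    (hgm : AEStronglyMeasurable g ν)
    (hB : ∀ᵐ x ∂ν, |g x| ≤ B)
    (hmean : ∫ x, g x ∂ν = 0) (hvar : ∫ x, (g x) ^ 2 ∂ν ≤ v)
    (hl : 0 ≤ l) (hlB : l * B ≤ 2) :
    ∫ x, Real.exp (l * g x) ∂ν ≤ Real.exp (2 * l ^ 2 * v) := by
  have hg : Integrable g ν := integrable_of_ae_bound B hgm hB
  have hg2 : Integrable (fun x => (g x) ^ 2) ν := by
    refine integrable_of_ae_bound (B ^ 2) ((hgm.mul hgm).congr ?_) ?_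
    · exact Filter.Eventually.of_forall fun x => by simp [Pi.mul_apply]; ring
    · filter_upwards [hB] with x hx
      have h0 : (0:ℝ) ≤ |g x| := abs_nonneg _
      have : |g x| ^ 2 ≤ B ^ 2 := by nlinarith
      simpa [abs_pow, sq_abs] using this
  have hpt : ∀ᵐ x ∂ν, Real.exp (l * g x) ≤ 1 + l * g x + 2 * (l * g x) ^ 2 := by
    filter_upwards [hB] with x hx
    refine exp_quad ?_
    calc l * g x ≤ l * |g x| := mul_le_mul_of_nonneg_left (le_abs_self _) hl
      _ ≤ l * B := mul_le_mul_of_nonneg_left hx hl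
      _ ≤ 2 := hlB
  have hint0 : Integrable (fun x => 1 + l * g x) ν := (integrable_const 1).add (hg.const_mul l)
  have hint1 : Integrable (fun x => (1 + l * g x) + (2 * l ^ 2) * (g x) ^ 2) ν :=
    hint0.add (hg2.const_mul _)
  have hint1' : Integrable (fun x => 1 + l * g x + 2 * (l * g x) ^ 2) ν :=
    hint1.congr (Filter.Eventually.of_forall fun x => by ring)
  have hexpint : Integrable (fun x => Real.exp (l * g x)) ν := by
    refine integrable_of_ae_bound (Real.exp (l * B)) ((Real.continuous_exp.measurable.comp_aemeasurable
      ((hgm.aemeasurable.const_mul l))).aestronglyMeasurable) ?_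
    filter_upwards [hB] with x hx
    rw [abs_of_nonneg (Real.exp_nonneg _)]
    refine Real.exp_le_exp.mpr ?_
    calc l * g x ≤ l * |g x| := mul_le_mul_of_nonneg_left (le_abs_self _) hl
      _ ≤ l * B := mul_le_mul_of_nonneg_left hx hl
  calc ∫ x, Real.exp (l * g x) ∂ν ≤ ∫ x, (1 + l * g x + 2 * (l * g x) ^ 2) ∂ν :=
        integral_mono_ae hexpint hint1' hpt
    _ = 1 + l * (∫ x, g x ∂ν) + 2 * l ^ 2 * ∫ x, (g x) ^ 2 ∂ν := by
        rw [integral_congr_ae (Filter.Eventually.of_forall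
          (fun x => show 1 + l * g x + 2 * (l * g x) ^ 2
            = (1 + l * g x) + (2 * l ^ 2) * (g x) ^ 2 by ring)),
          integral_add hint0 (hg2.const_mul _),
          integral_add (integrable_const 1) (hg.const_mul l), integral_const,
          integral_const_mul, integral_const_mul]
        simp [measure_univ]
    _ ≤ 1 + 2 * l ^ 2 * v := by
        rw [hmean]
        have : 2 * l ^ 2 * ∫ x, (g x) ^ 2 ∂ν ≤ 2 * l ^ 2 * v :=
          mul_le_mul_of_nonneg_left hvar (by positivity)
        linarith
    _ ≤ Real.exp (2 * l ^ 2 * v) := by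
        have := Real.add_one_le_exp (2 * l ^ 2 * v); linarith

end Helpers

section Fubini

variable {E : Type*} [NormedAddCommGroup E] [MeasurableSpace E] [BorelSpace E]

lemma ae_prod_bound {ν₁ ν₂ : Measure E} [IsProbabilityMeasure ν₁] [IsProbabilityMeasure ν₂]
    {c₁ c₂ C : ℝ} {φ : E → E → ℝ}
    (h1 : ∀ᵐ x ∂ν₁, ‖x‖ ≤ c₁) (h2 : ∀ᵐ y ∂ν₂, ‖y‖ ≤ c₂)
    (hC : ∀ x y, ‖x‖ ≤ c₁ → ‖y‖ ≤ c₂ → |φ x y| ≤ C) :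
    ∀ᵐ z ∂ν₁.prod ν₂, |φ z.1 z.2| ≤ C := by
  have mA : MeasurableSet {x : E | ‖x‖ ≤ c₁} :=
    measurableSet_le continuous_norm.measurable measurable_const
  have mB : MeasurableSet {y : E | ‖y‖ ≤ c₂} :=
    measurableSet_le continuous_norm.measurable measurable_const
  have hA : ν₁ {x : E | ‖x‖ ≤ c₁}ᶜ = 0 := by
    have := ae_iff.mp h1
    convert this using 2
    rfl
  have hB : ν₂ {y : E | ‖y‖ ≤ c₂}ᶜ = 0 := by
    have := ae_iff.mp h2
    convert this using 2
    rfl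
  have hsub : ({x : E | ‖x‖ ≤ c₁} ×ˢ {y : E | ‖y‖ ≤ c₂})ᶜ ⊆
      ({x : E | ‖x‖ ≤ c₁}ᶜ ×ˢ (Set.univ : Set E)) ∪
        ((Set.univ : Set E) ×ˢ {y : E | ‖y‖ ≤ c₂}ᶜ) := by
    intro z hz
    simp only [Set.mem_compl_iff, Set.mem_prod] at hz ⊢
    simp only [Set.mem_union, Set.mem_prod, Set.mem_univ, Set.mem_compl_iff, true_and, and_true]
    by_contra hcon
    push_neg at hcon
    exact hz ⟨hcon.1, hcon.2⟩
  have hnull : (ν₁.prod ν₂) ({x : E | ‖x‖ ≤ c₁} ×ˢ {y : E | ‖y‖ ≤ c₂})ᶜ = 0 := by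
    refine measure_mono_null hsub ?_
    refine le_antisymm ?_ zero_le
    calc (ν₁.prod ν₂) (({x : E | ‖x‖ ≤ c₁}ᶜ ×ˢ Set.univ) ∪ (Set.univ ×ˢ {y : E | ‖y‖ ≤ c₂}ᶜ))
        ≤ (ν₁.prod ν₂) ({x : E | ‖x‖ ≤ c₁}ᶜ ×ˢ Set.univ)
          + (ν₁.prod ν₂) (Set.univ ×ˢ {y : E | ‖y‖ ≤ c₂}ᶜ) := measure_union_le _ _
      _ = 0 := by rw [Measure.prod_prod, Measure.prod_prod, hA, hB]; simp
  have hae : ∀ᵐ z ∂ν₁.prod ν₂, z ∈ {x : E | ‖x‖ ≤ c₁} ×ˢ {y : E | ‖y‖ ≤ c₂} := by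
    rw [ae_iff]
    convert hnull using 2
    rfl
  filter_upwards [hae] with z hz
  exact hC z.1 z.2 hz.1 hz.2

variable {Ω : Type*} [MeasurableSpace Ω] {μ : Measure Ω} [IsProbabilityMeasure μ]

lemma indep_fubini {U V : Ω → E} (hU : Measurable U) (hV : Measurable V)
    (h : IndepFun U V μ) {φ : E → E → ℝ}
    (hφ : Measurable fun p : E × E => φ p.1 p.2) {c₁ c₂ C : ℝ}
    (hUb : ∀ᵐ ω ∂μ, ‖U ω‖ ≤ c₁) (hVb : ∀ᵐ ω ∂μ, ‖V ω‖ ≤ c₂)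
    (hC : ∀ x y, ‖x‖ ≤ c₁ → ‖y‖ ≤ c₂ → |φ x y| ≤ C) :
    ∫ ω, φ (U ω) (V ω) ∂μ = ∫ x, ∫ y, φ x y ∂(μ.map V) ∂(μ.map U) := by
  haveI : IsProbabilityMeasure (μ.map U) := Measure.isProbabilityMeasure_map hU.aemeasurable
  haveI : IsProbabilityMeasure (μ.map V) := Measure.isProbabilityMeasure_map hV.aemeasurable
  have mA : MeasurableSet {x : E | ‖x‖ ≤ c₁} :=
    measurableSet_le continuous_norm.measurable measurable_const
  have mB : MeasurableSet {y : E | ‖y‖ ≤ c₂} :=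
    measurableSet_le continuous_norm.measurable measurable_const
  have hU' : ∀ᵐ x ∂(μ.map U), ‖x‖ ≤ c₁ := (ae_map_iff hU.aemeasurable mA).mpr hUb
  have hV' : ∀ᵐ y ∂(μ.map V), ‖y‖ ≤ c₂ := (ae_map_iff hV.aemeasurable mB).mpr hVb
  have hmap : μ.map (fun ω => (U ω, V ω)) = (μ.map U).prod (μ.map V) :=
    (indepFun_iff_map_prod_eq_prod_map_map hU.aemeasurable hV.aemeasurable).mp h
  have hint : Integrable (fun z : E × E => φ z.1 z.2) ((μ.map U).prod (μ.map V)) :=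
    integrable_of_ae_bound C hφ.aestronglyMeasurable (ae_prod_bound hU' hV' hC)
  calc ∫ ω, φ (U ω) (V ω) ∂μ
      = ∫ z : E × E, φ z.1 z.2 ∂(μ.map fun ω => (U ω, V ω)) :=
        (integral_map (hU.prodMk hV).aemeasurable hφ.aestronglyMeasurable).symm
    _ = ∫ z : E × E, φ z.1 z.2 ∂((μ.map U).prod (μ.map V)) := by rw [hmap]
    _ = ∫ x, ∫ y, φ x y ∂(μ.map V) ∂(μ.map U) := integral_prod _ hint

end Fubini

section MeanNorm

variable {Ω : Type*} [MeasurableSpace Ω] {μ : Measure Ω} [IsProbabilityMeasure μ]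
variable {E : Type*} [NormedAddCommGroup E] [MeasurableSpace E] [BorelSpace E]
variable {V : Ω → E} {c₂ : ℝ}

lemma integrable_norm_add (hV : Measurable V) (hVb : ∀ᵐ ω ∂μ, ‖V ω‖ ≤ c₂) (w : E) :
    Integrable (fun ω => ‖w + V ω‖) μ := by
  refine integrable_of_ae_bound (‖w‖ + c₂)
    ((continuous_norm.comp (continuous_const.add continuous_id)).measurable.comp
      hV).aestronglyMeasurable ?_
  filter_upwards [hVb] with ω hω
  rw [abs_of_nonneg (norm_nonneg _)]
  calc ‖w + V ω‖ ≤ ‖w‖ + ‖V ω‖ := norm_add_le _ _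
    _ ≤ ‖w‖ + c₂ := by linarith

lemma mean_norm_abs_sub (hV : Measurable V) (hVb : ∀ᵐ ω ∂μ, ‖V ω‖ ≤ c₂) (w w' : E) :
    |(∫ ω, ‖w + V ω‖ ∂μ) - ∫ ω, ‖w' + V ω‖ ∂μ| ≤ ‖w - w'‖ := by
  have key : ∀ (a a' : E), (∫ ω, ‖a + V ω‖ ∂μ) - (∫ ω, ‖a' + V ω‖ ∂μ) ≤ ‖a - a'‖ := by
    intro a a'
    rw [← integral_sub (integrable_norm_add hV hVb a) (integrable_norm_add hV hVb a')]
    have hpt : ∀ ω, ‖a + V ω‖ - ‖a' + V ω‖ ≤ ‖a - a'‖ := by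
      intro ω
      have h1 : ‖a + V ω‖ ≤ ‖a' + V ω‖ + ‖a - a'‖ := by
        have : a + V ω = (a' + V ω) + (a - a') := by abel
        rw [this]; exact norm_add_le _ _
      linarith
    calc ∫ ω, (‖a + V ω‖ - ‖a' + V ω‖) ∂μ ≤ ∫ _ω, ‖a - a'‖ ∂μ :=
          integral_mono_ae ((integrable_norm_add hV hVb a).sub
            (integrable_norm_add hV hVb a')) (integrable_const _)
            (Filter.Eventually.of_forall hpt)
      _ = ‖a - a'‖ := by simp [measure_univ]
  rw [abs_sub_le_iff]
  constructor
  · exact key w w'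
  · have := key w' w
    rwa [norm_sub_rev] at this
  
lemma mean_norm_le (hV : Measurable V) (hVb : ∀ᵐ ω ∂μ, ‖V ω‖ ≤ c₂) (w : E) :
    ∫ ω, ‖w + V ω‖ ∂μ ≤ ‖w‖ + c₂ := by
  calc ∫ ω, ‖w + V ω‖ ∂μ ≤ ∫ _ω, (‖w‖ + c₂) ∂μ := by
        refine integral_mono_ae (integrable_norm_add hV hVb w) (integrable_const _) ?_
        filter_upwards [hVb] with ω hω
        calc ‖w + V ω‖ ≤ ‖w‖ + ‖V ω‖ := norm_add_le _ _
          _ ≤ ‖w‖ + c₂ := by linarith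
    _ = ‖w‖ + c₂ := by simp [measure_univ]

lemma mean_norm_continuous (hV : Measurable V) (hVb : ∀ᵐ ω ∂μ, ‖V ω‖ ≤ c₂) :
    Continuous (fun w : E => ∫ ω, ‖w + V ω‖ ∂μ) := by
  have : LipschitzWith 1 (fun w : E => ∫ ω, ‖w + V ω‖ ∂μ) := by
    refine LipschitzWith.of_dist_le_mul fun w w' => ?_
    rw [Real.dist_eq, dist_eq_norm, NNReal.coe_one, one_mul]
    exact mean_norm_abs_sub hV hVb w w'
  exact this.continuous

end MeanNorm

section Core

variable {Ω : Type*} [MeasurableSpace Ω] {μ : Measure Ω} [IsProbabilityMeasure μ]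
variable {E : Type*} [NormedAddCommGroup E] [MeasurableSpace E] [BorelSpace E]
  [SecondCountableTopology E]
variable {n : ℕ} {X : Fin n → Ω → E} {b v : ℝ}

omit [IsProbabilityMeasure μ] [MeasurableSpace E] [BorelSpace E] [SecondCountableTopology E] in
lemma sum_ae_bound (hbdd : ∀ i, ∀ᵐ ω ∂μ, ‖X i ω‖ ≤ b) (s : Finset (Fin n)) :
    ∀ᵐ ω ∂μ, ‖∑ j ∈ s, X j ω‖ ≤ s.card * b := by
  have h : ∀ᵐ ω ∂μ, ∀ j ∈ s, ‖X j ω‖ ≤ b :=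
    (ae_ball_iff s.countable_toSet).mpr fun j _ => hbdd j
  filter_upwards [h] with ω hω
  calc ‖∑ j ∈ s, X j ω‖ ≤ ∑ j ∈ s, ‖X j ω‖ := norm_sum_le _ _
    _ ≤ ∑ _j ∈ s, b := Finset.sum_le_sum hω
    _ = s.card * b := by simp [mul_comm]

theorem exp_key (hindep : iIndepFun X μ)
    (hmeas : ∀ i, Measurable (X i))
    (hbdd : ∀ i, ∀ᵐ ω ∂μ, ‖X i ω‖ ≤ b)
    (hvar : ∀ i, ∫ ω, ‖X i ω‖ ^ 2 ∂μ ≤ v)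
    (hb : 0 ≤ b) {l : ℝ} (hl : 0 ≤ l) (hlb : l * (2 * b) ≤ 2) :
    ∀ (s : Finset (Fin n)) (u : E),
      ∫ ω, Real.exp (l * ‖u + ∑ j ∈ s, X j ω‖) ∂μ ≤
        Real.exp (l * (∫ ω, ‖u + ∑ j ∈ s, X j ω‖ ∂μ) + 2 * s.card * l ^ 2 * v) := by
  classical
  intro s
  induction s using Finset.induction_on with
  | empty =>
      intro u
      simp [measure_univ]
  | insert i s hi IH =>
      intro u
      set V : Ω → E := fun ω => ∑ j ∈ s, X j ω with hV
      have hVmeas : Measurable V := Finset.measurable_sum s (fun j _ => hmeas j)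
      set c₂ : ℝ := s.card * b with hc₂
      have hc₂0 : 0 ≤ c₂ := by positivity
      have hVb : ∀ᵐ ω ∂μ, ‖V ω‖ ≤ c₂ := sum_ae_bound hbdd s
      have hUmeas : Measurable (X i) := hmeas i
      have hUb : ∀ᵐ ω ∂μ, ‖X i ω‖ ≤ b := hbdd i
      have hUV : IndepFun (X i) V μ := by
        have h0 : IndepFun (∑ j ∈ s, X j) (X i) μ :=
          hindep.indepFun_finsetSum_of_notMem hmeas hi
        have he : (∑ j ∈ s, X j) = V := by
          funext ω; simp [hV, Finset.sum_apply]
        rw [he] at h0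
        exact h0.symm
      set νU : Measure E := μ.map (X i) with hνU
      set νV : Measure E := μ.map V with hνV
      haveI : IsProbabilityMeasure νU := Measure.isProbabilityMeasure_map hUmeas.aemeasurable
      haveI : IsProbabilityMeasure νV := Measure.isProbabilityMeasure_map hVmeas.aemeasurable
      have mA : MeasurableSet {x : E | ‖x‖ ≤ b} :=
        measurableSet_le continuous_norm.measurable measurable_const
      have hUb' : ∀ᵐ x ∂νU, ‖x‖ ≤ b := (ae_map_iff hUmeas.aemeasurable mA).mpr hUb
      set m : E → ℝ := fun w => ∫ ω, ‖w + V ω‖ ∂μ with hm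
      have hmcont : Continuous m := mean_norm_continuous hVmeas hVb
      have hmlip : ∀ w w', |m w - m w'| ≤ ‖w - w'‖ := mean_norm_abs_sub hVmeas hVb
      have hmle : ∀ w, m w ≤ ‖w‖ + c₂ := mean_norm_le hVmeas hVb
      have hmnonneg : ∀ w, 0 ≤ m w := fun w => integral_nonneg fun ω => norm_nonneg _
      set φ : E → E → ℝ := fun x y => Real.exp (l * ‖u + x + y‖) with hφ
      set ψ : E → E → ℝ := fun x y => ‖u + x + y‖ with hψ
      have hψc : Continuous fun p : E × E => ψ p.1 p.2 :=
        ((continuous_const.add continuous_fst).add continuous_snd).norm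
      have hψm : Measurable fun p : E × E => ψ p.1 p.2 := hψc.measurable
      have hφm : Measurable fun p : E × E => φ p.1 p.2 :=
        (Real.continuous_exp.comp (continuous_const.mul hψc)).measurable
      have hψC : ∀ x y : E, ‖x‖ ≤ b → ‖y‖ ≤ c₂ → |ψ x y| ≤ ‖u‖ + b + c₂ := by
        intro x y hx hy
        simp only [hψ]
        rw [abs_of_nonneg (norm_nonneg _)]
        calc ‖u + x + y‖ ≤ ‖u + x‖ + ‖y‖ := norm_add_le _ _
          _ ≤ ‖u‖ + ‖x‖ + ‖y‖ := by
              have := norm_add_le u x; linarith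
          _ ≤ ‖u‖ + b + c₂ := by linarith
      have hφC : ∀ x y : E, ‖x‖ ≤ b → ‖y‖ ≤ c₂ →
          |φ x y| ≤ Real.exp (l * (‖u‖ + b + c₂)) := by
        intro x y hx hy
        simp only [hφ]
        rw [abs_of_nonneg (Real.exp_nonneg _)]
        refine Real.exp_le_exp.mpr (mul_le_mul_of_nonneg_left ?_ hl)
        have h2 := hψC x y hx hy
        simp only [hψ] at h2
        rw [abs_of_nonneg (norm_nonneg _)] at h2
        exact h2
      have hsum : ∀ ω, u + ∑ j ∈ insert i s, X j ω = u + X i ω + V ω := by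
        intro ω
        simp only [hV]
        rw [Finset.sum_insert hi, ← add_assoc]
      have hfub : ∫ ω, Real.exp (l * ‖u + ∑ j ∈ insert i s, X j ω‖) ∂μ
          = ∫ x, ∫ y, φ x y ∂νV ∂νU := by
        rw [integral_congr_ae (Filter.Eventually.of_forall fun ω => by rw [hsum ω])]
        exact indep_fubini hUmeas hVmeas hUV hφm hUb hVb hφC
      have hfub2 : ∫ ω, ‖u + ∑ j ∈ insert i s, X j ω‖ ∂μ
          = ∫ x, ∫ y, ψ x y ∂νV ∂νU := by
        rw [integral_congr_ae (Filter.Eventually.of_forall fun ω => by rw [hsum ω])]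
        exact indep_fubini hUmeas hVmeas hUV hψm hUb hVb hψC
      have hinner_exp : ∀ x : E, ∫ y, φ x y ∂νV
          = ∫ ω, Real.exp (l * ‖u + x + V ω‖) ∂μ := by
        intro x
        simp only [hφ, hνV]
        refine integral_map hVmeas.aemeasurable ?_
        have hc : Continuous fun y : E => Real.exp (l * ‖u + x + y‖) :=
          Real.continuous_exp.comp (continuous_const.mul
            ((continuous_const.add continuous_id).norm))
        exact hc.measurable.aestronglyMeasurable
      have hinner_psi : ∀ x : E, ∫ y, ψ x y ∂νV = m (u + x) := by
        intro x
        simp only [hψ, hm, hνV]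
        have hc : Continuous fun y : E => ‖u + x + y‖ :=
          (continuous_const.add continuous_id).norm
        exact integral_map hVmeas.aemeasurable hc.measurable.aestronglyMeasurable
      set M : ℝ := ∫ x, m (u + x) ∂νU with hM
      have hM_eq : ∫ ω, ‖u + ∑ j ∈ insert i s, X j ω‖ ∂μ = M := by
        rw [hfub2, hM]
        exact integral_congr_ae (Filter.Eventually.of_forall fun x => hinner_psi x)
      have hmc2 : Continuous fun x : E => m (u + x) :=
        hmcont.comp (continuous_const.add continuous_id)
      have hmum : AEStronglyMeasurable (fun x : E => m (u + x)) νU :=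
        hmc2.measurable.aestronglyMeasurable
      have hmu_bound : ∀ᵐ x ∂νU, |m (u + x)| ≤ ‖u‖ + b + c₂ := by
        filter_upwards [hUb'] with x hx
        rw [abs_of_nonneg (hmnonneg _)]
        calc m (u + x) ≤ ‖u + x‖ + c₂ := hmle _
          _ ≤ ‖u‖ + ‖x‖ + c₂ := by have := norm_add_le u x; linarith
          _ ≤ ‖u‖ + b + c₂ := by linarith
      have hmu_int : Integrable (fun x : E => m (u + x)) νU :=
        integrable_of_ae_bound _ hmum hmu_bound
      set g : E → ℝ := fun x => m (u + x) - M with hg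
      have hgm : AEStronglyMeasurable g νU := hmum.sub aestronglyMeasurable_const
      have hgB : ∀ᵐ x ∂νU, |g x| ≤ 2 * b := by
        filter_upwards [hUb'] with x hx
        have habs : |g x| = |∫ x', (m (u + x) - m (u + x')) ∂νU| := by
          simp only [hg]
          congr 1
          rw [integral_sub (integrable_const _) hmu_int, integral_const]
          simp [measure_univ, hM]
        rw [habs]
        have step1 : |∫ x', (m (u + x) - m (u + x')) ∂νU|
            ≤ ∫ x', |m (u + x) - m (u + x')| ∂νU := by
          simpa [Real.norm_eq_abs] using
            norm_integral_le_integral_norm (μ := νU) (f := fun x' => m (u + x) - m (u + x'))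
        refine step1.trans ?_
        have hptw : ∀ᵐ x' ∂νU, |m (u + x) - m (u + x')| ≤ 2 * b := by
          filter_upwards [hUb'] with x' hx'
          calc |m (u + x) - m (u + x')| ≤ ‖(u + x) - (u + x')‖ := hmlip _ _
            _ = ‖x - x'‖ := by congr 1; abel
            _ ≤ ‖x‖ + ‖x'‖ := norm_sub_le _ _
            _ ≤ 2 * b := by linarith
        calc ∫ x', |m (u + x) - m (u + x')| ∂νU ≤ ∫ _x', (2 * b) ∂νU := by
              refine integral_mono_ae ?_ (integrable_const _) hptw
              exact ((integrable_const _).sub hmu_int).abs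
          _ = 2 * b := by simp [measure_univ]
      have hgmean : ∫ x, g x ∂νU = 0 := by
        simp only [hg]
        rw [integral_sub hmu_int (integrable_const _), integral_const]
        simp [measure_univ, hM]
      have hg2int : Integrable (fun x => (m (u + x)) ^ 2) νU := by
        refine integrable_of_ae_bound ((‖u‖ + b + c₂) ^ 2) ((hmum.mul hmum).congr
          (Filter.Eventually.of_forall fun x => by simp [Pi.mul_apply]; ring)) ?_
        filter_upwards [hmu_bound] with x hx
        have h0 : (0:ℝ) ≤ |m (u + x)| := abs_nonneg _
        rw [abs_pow]
        nlinarith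
      have hnormsq_int : Integrable (fun x : E => ‖x‖ ^ 2) νU := by
        refine integrable_of_ae_bound (b ^ 2)
          ((continuous_norm.pow 2).measurable).aestronglyMeasurable ?_
        filter_upwards [hUb'] with x hx
        have h0 : (0:ℝ) ≤ ‖x‖ := norm_nonneg _
        rw [abs_pow, abs_of_nonneg h0]
        nlinarith
      have hgvar : ∫ x, (g x) ^ 2 ∂νU ≤ v := by
        have hmin := integral_sq_sub_mean_le (ν := νU) (g := fun x => m (u + x)) (m u)
          hmu_int hg2int
        rw [← hM] at hmin
        have hpt : ∀ᵐ x ∂νU, (m (u + x) - m u) ^ 2 ≤ ‖x‖ ^ 2 := by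
          refine Filter.Eventually.of_forall fun x => ?_
          have h1 : |m (u + x) - m u| ≤ ‖x‖ := by
            have h2 := hmlip (u + x) u
            have e : (u + x) - u = x := by abel
            rwa [e] at h2
          have h2 := abs_le.mp h1
          exact sq_le_sq' (by linarith) (by linarith)
        have hmap2 : ∫ x, ‖x‖ ^ 2 ∂νU = ∫ ω, ‖X i ω‖ ^ 2 ∂μ := by
          simp only [hνU]
          exact integral_map hUmeas.aemeasurable
            ((continuous_norm.pow 2).measurable).aestronglyMeasurable
        calc ∫ x, (g x) ^ 2 ∂νU ≤ ∫ x, (m (u + x) - m u) ^ 2 ∂νU := hmin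
          _ ≤ ∫ x, ‖x‖ ^ 2 ∂νU :=
              integral_mono_ae (integrable_sub_sq _ hmu_int hg2int) hnormsq_int hpt
          _ = ∫ ω, ‖X i ω‖ ^ 2 ∂μ := hmap2
          _ ≤ v := hvar i
      have hmgf : ∫ x, Real.exp (l * g x) ∂νU ≤ Real.exp (2 * l ^ 2 * v) :=
        mgf_step hgm hgB hgmean hgvar hl hlb
      have hIH : ∀ x : E, ∫ y, φ x y ∂νV
          ≤ Real.exp (l * m (u + x) + 2 * s.card * l ^ 2 * v) := by
        intro x
        rw [hinner_exp x]
        have h1 := IH (u + x)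
        have e1 : ∫ ω, Real.exp (l * ‖u + x + V ω‖) ∂μ
            = ∫ ω, Real.exp (l * ‖u + x + ∑ j ∈ s, X j ω‖) ∂μ := by simp only [hV]
        have e2 : m (u + x) = ∫ ω, ‖u + x + ∑ j ∈ s, X j ω‖ ∂μ := by simp only [hm, hV]
        rw [e1, e2]
        exact h1
      have sm1 : StronglyMeasurable (fun x : E => ∫ y, φ x y ∂νV) :=
        (hφm.stronglyMeasurable).integral_prod_right'
      have hV' : ∀ᵐ y ∂νV, ‖y‖ ≤ c₂ := by
        refine (ae_map_iff hVmeas.aemeasurable ?_).mpr hVb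
        exact measurableSet_le continuous_norm.measurable measurable_const
      have hinner_bdd : ∀ᵐ x ∂νU, |∫ y, φ x y ∂νV| ≤ Real.exp (l * (‖u‖ + b + c₂)) := by
        filter_upwards [hUb'] with x hx
        have hcy : Continuous fun y : E => φ x y := by
          simp only [hφ]
          exact Real.continuous_exp.comp (continuous_const.mul
            ((continuous_const.add continuous_id).norm))
        have hint : Integrable (fun y => φ x y) νV := by
          refine integrable_of_ae_bound (Real.exp (l * (‖u‖ + b + c₂)))
            hcy.measurable.aestronglyMeasurable ?_
          filter_upwards [hV'] with y hy
          exact hφC x y hx hy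
        have h1 : |∫ y, φ x y ∂νV| ≤ ∫ y, |φ x y| ∂νV := by
          simpa [Real.norm_eq_abs] using norm_integral_le_integral_norm (μ := νV)
            (f := fun y => φ x y)
        refine h1.trans ?_
        calc ∫ y, |φ x y| ∂νV ≤ ∫ _y, Real.exp (l * (‖u‖ + b + c₂)) ∂νV := by
              refine integral_mono_ae hint.abs (integrable_const _) ?_
              filter_upwards [hV'] with y hy
              exact hφC x y hx hy
          _ = Real.exp (l * (‖u‖ + b + c₂)) := by simp [measure_univ]
      have int1 : Integrable (fun x : E => ∫ y, φ x y ∂νV) νU :=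
        integrable_of_ae_bound _ sm1.aestronglyMeasurable hinner_bdd
      have int2 : Integrable
          (fun x : E => Real.exp (l * m (u + x) + 2 * s.card * l ^ 2 * v)) νU := by
        have hc : Continuous fun x : E =>
            Real.exp (l * m (u + x) + 2 * s.card * l ^ 2 * v) :=
          Real.continuous_exp.comp ((continuous_const.mul hmc2).add continuous_const)
        refine integrable_of_ae_bound
          (Real.exp (l * (‖u‖ + b + c₂) + 2 * s.card * l ^ 2 * v))
          hc.measurable.aestronglyMeasurable ?_
        filter_upwards [hmu_bound] with x hx
        rw [abs_of_nonneg (Real.exp_nonneg _)]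
        refine Real.exp_le_exp.mpr ?_
        have h3 : m (u + x) ≤ ‖u‖ + b + c₂ := (le_abs_self _).trans hx
        have h2 : l * m (u + x) ≤ l * (‖u‖ + b + c₂) := mul_le_mul_of_nonneg_left h3 hl
        linarith
      rw [hfub, hM_eq]
      have hcard : ((insert i s).card : ℝ) = (s.card : ℝ) + 1 := by
        rw [Finset.card_insert_of_notMem hi]; push_cast; ring
      calc ∫ x, ∫ y, φ x y ∂νV ∂νU
          ≤ ∫ x, Real.exp (l * m (u + x) + 2 * s.card * l ^ 2 * v) ∂νU :=
            integral_mono_ae int1 int2 (Filter.Eventually.of_forall hIH)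
        _ = Real.exp (2 * s.card * l ^ 2 * v) * (Real.exp (l * M)
              * ∫ x, Real.exp (l * g x) ∂νU) := by
            rw [← integral_const_mul, ← integral_const_mul]
            refine integral_congr_ae (Filter.Eventually.of_forall fun x => ?_)
            simp only [hg, ← Real.exp_add]
            congr 1
            ring
        _ ≤ Real.exp (2 * s.card * l ^ 2 * v) * (Real.exp (l * M)
              * Real.exp (2 * l ^ 2 * v)) := by
            refine mul_le_mul_of_nonneg_left ?_ (Real.exp_nonneg _)
            exact mul_le_mul_of_nonneg_left hmgf (Real.exp_nonneg _)
        _ = Real.exp (l * M + 2 * (insert i s).card * l ^ 2 * v) := by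
            rw [← Real.exp_add, ← Real.exp_add, hcard]
            ring_nf

open scoped RealInnerProductSpace in
theorem sq_key [InnerProductSpace ℝ E] [CompleteSpace E]
    (hindep : iIndepFun X μ)
    (hmeas : ∀ i, Measurable (X i))
    (hbdd : ∀ i, ∀ᵐ ω ∂μ, ‖X i ω‖ ≤ b)
    (hmean : ∀ i, ∫ ω, X i ω ∂μ = 0)
    (hvar : ∀ i, ∫ ω, ‖X i ω‖ ^ 2 ∂μ ≤ v)
    (hb : 0 ≤ b) :
    ∀ (s : Finset (Fin n)) (u : E),
      ∫ ω, ‖u + ∑ j ∈ s, X j ω‖ ^ 2 ∂μ ≤ ‖u‖ ^ 2 + s.card * v := by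
  classical
  intro s
  induction s using Finset.induction_on with
  | empty =>
      intro u
      simp [measure_univ]
  | insert i s hi IH =>
      intro u
      set V : Ω → E := fun ω => ∑ j ∈ s, X j ω with hV
      have hVmeas : Measurable V := Finset.measurable_sum s (fun j _ => hmeas j)
      set c₂ : ℝ := s.card * b with hc₂
      have hc₂0 : 0 ≤ c₂ := by positivity
      have hVb : ∀ᵐ ω ∂μ, ‖V ω‖ ≤ c₂ := sum_ae_bound hbdd s
      have hUmeas : Measurable (X i) := hmeas i
      have hUb : ∀ᵐ ω ∂μ, ‖X i ω‖ ≤ b := hbdd i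
      have hUV : IndepFun (X i) V μ := by
        have h0 : IndepFun (∑ j ∈ s, X j) (X i) μ :=
          hindep.indepFun_finsetSum_of_notMem hmeas hi
        have he : (∑ j ∈ s, X j) = V := by
          funext ω; simp [hV, Finset.sum_apply]
        rw [he] at h0
        exact h0.symm
      set νU : Measure E := μ.map (X i) with hνU
      set νV : Measure E := μ.map V with hνV
      haveI : IsProbabilityMeasure νU := Measure.isProbabilityMeasure_map hUmeas.aemeasurable
      haveI : IsProbabilityMeasure νV := Measure.isProbabilityMeasure_map hVmeas.aemeasurable
      have mA : MeasurableSet {x : E | ‖x‖ ≤ b} :=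
        measurableSet_le continuous_norm.measurable measurable_const
      have hUb' : ∀ᵐ x ∂νU, ‖x‖ ≤ b := (ae_map_iff hUmeas.aemeasurable mA).mpr hUb
      set χ : E → E → ℝ := fun x y => ‖u + x + y‖ ^ 2 with hχ
      have hχc : Continuous fun p : E × E => χ p.1 p.2 :=
        (((continuous_const.add continuous_fst).add continuous_snd).norm).pow 2
      have hχm : Measurable fun p : E × E => χ p.1 p.2 := hχc.measurable
      have hχC : ∀ x y : E, ‖x‖ ≤ b → ‖y‖ ≤ c₂ → |χ x y| ≤ (‖u‖ + b + c₂) ^ 2 := by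
        intro x y hx hy
        simp only [hχ]
        have h1 : ‖u + x + y‖ ≤ ‖u‖ + b + c₂ := by
          calc ‖u + x + y‖ ≤ ‖u + x‖ + ‖y‖ := norm_add_le _ _
            _ ≤ ‖u‖ + ‖x‖ + ‖y‖ := by have := norm_add_le u x; linarith
            _ ≤ ‖u‖ + b + c₂ := by linarith
        have h0 : (0:ℝ) ≤ ‖u + x + y‖ := norm_nonneg _
        rw [abs_pow, abs_of_nonneg h0]
        nlinarith
      have hsum : ∀ ω, u + ∑ j ∈ insert i s, X j ω = u + X i ω + V ω := by
        intro ω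
        simp only [hV]
        rw [Finset.sum_insert hi, ← add_assoc]
      have hfub : ∫ ω, ‖u + ∑ j ∈ insert i s, X j ω‖ ^ 2 ∂μ
          = ∫ x, ∫ y, χ x y ∂νV ∂νU := by
        rw [integral_congr_ae (Filter.Eventually.of_forall fun ω => by rw [hsum ω])]
        exact indep_fubini hUmeas hVmeas hUV hχm hUb hVb hχC
      have hinner : ∀ x : E, ∫ y, χ x y ∂νV ≤ ‖u + x‖ ^ 2 + s.card * v := by
        intro x
        have he : ∫ y, χ x y ∂νV = ∫ ω, ‖u + x + V ω‖ ^ 2 ∂μ := by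
          simp only [hχ, hνV]
          have hc : Continuous fun y : E => ‖u + x + y‖ ^ 2 :=
            ((continuous_const.add continuous_id).norm).pow 2
          exact integral_map hVmeas.aemeasurable hc.measurable.aestronglyMeasurable
        rw [he]
        have e1 : ∫ ω, ‖u + x + V ω‖ ^ 2 ∂μ
            = ∫ ω, ‖u + x + ∑ j ∈ s, X j ω‖ ^ 2 ∂μ := by simp only [hV]
        rw [e1]
        exact IH (u + x)
      have sm1 : StronglyMeasurable (fun x : E => ∫ y, χ x y ∂νV) :=
        (hχm.stronglyMeasurable).integral_prod_right'
      have hV' : ∀ᵐ y ∂νV, ‖y‖ ≤ c₂ := by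
        refine (ae_map_iff hVmeas.aemeasurable ?_).mpr hVb
        exact measurableSet_le continuous_norm.measurable measurable_const
      have hinner_bdd : ∀ᵐ x ∂νU, |∫ y, χ x y ∂νV| ≤ (‖u‖ + b + c₂) ^ 2 := by
        filter_upwards [hUb'] with x hx
        have hcy : Continuous fun y : E => χ x y := by
          simp only [hχ]
          exact ((continuous_const.add continuous_id).norm).pow 2
        have hint : Integrable (fun y => χ x y) νV := by
          refine integrable_of_ae_bound ((‖u‖ + b + c₂) ^ 2)
            hcy.measurable.aestronglyMeasurable ?_
          filter_upwards [hV'] with y hy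
          exact hχC x y hx hy
        have h1 : |∫ y, χ x y ∂νV| ≤ ∫ y, |χ x y| ∂νV := by
          simpa [Real.norm_eq_abs] using norm_integral_le_integral_norm (μ := νV)
            (f := fun y => χ x y)
        refine h1.trans ?_
        calc ∫ y, |χ x y| ∂νV ≤ ∫ _y, (‖u‖ + b + c₂) ^ 2 ∂νV := by
              refine integral_mono_ae hint.abs (integrable_const _) ?_
              filter_upwards [hV'] with y hy
              exact hχC x y hx hy
          _ = (‖u‖ + b + c₂) ^ 2 := by simp [measure_univ]
      have int1 : Integrable (fun x : E => ∫ y, χ x y ∂νV) νU :=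
        integrable_of_ae_bound _ sm1.aestronglyMeasurable hinner_bdd
      have int2 : Integrable (fun x : E => ‖u + x‖ ^ 2 + s.card * v) νU := by
        have hc : Continuous fun x : E => ‖u + x‖ ^ 2 + s.card * v :=
          (((continuous_const.add continuous_id).norm).pow 2).add continuous_const
        refine integrable_of_ae_bound ((‖u‖ + b) ^ 2 + s.card * |v|)
          hc.measurable.aestronglyMeasurable ?_
        filter_upwards [hUb'] with x hx
        have h1 : ‖u + x‖ ≤ ‖u‖ + b := by have := norm_add_le u x; linarith
        have h0 : (0:ℝ) ≤ ‖u + x‖ := norm_nonneg _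
        have h2 : ‖u + x‖ ^ 2 ≤ (‖u‖ + b) ^ 2 := by nlinarith
        have h3 : (s.card : ℝ) * v ≤ s.card * |v| :=
          mul_le_mul_of_nonneg_left (le_abs_self v) (by positivity)
        have h4 : -(s.card * |v|) ≤ (s.card : ℝ) * v := by
          have := neg_abs_le v
          have := mul_le_mul_of_nonneg_left (neg_abs_le v) (show (0:ℝ) ≤ s.card by positivity)
          linarith [this]
        rw [abs_le]
        constructor <;> nlinarith
      -- the key single-variable integral
      have hXint : Integrable (X i) μ :=
        integrable_of_ae_bound' b hUmeas.aestronglyMeasurable hUb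
      have hid_int : Integrable (fun x : E => x) νU := by
        refine integrable_of_ae_bound' b measurable_id.aestronglyMeasurable ?_
        exact hUb'
      have hmean' : ∫ x, x ∂νU = 0 := by
        simp only [hνU]
        rw [integral_map (f := fun x : E => x) hUmeas.aemeasurable measurable_id.aestronglyMeasurable]
        simpa using hmean i
      have hsq : ∫ x, ‖u + x‖ ^ 2 ∂νU ≤ ‖u‖ ^ 2 + v := by
        have hexp : ∀ x : E, ‖u + x‖ ^ 2 = ‖u‖ ^ 2 + 2 * ⟪u, x⟫ + ‖x‖ ^ 2 :=
          fun x => norm_add_sq_real u x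
        have hinner_int : Integrable (fun x : E => ⟪u, x⟫) νU := by
          refine integrable_of_ae_bound (‖u‖ * b)
            ((continuous_const.inner continuous_id).measurable).aestronglyMeasurable ?_
        -- bound |⟪u,x⟫| ≤ ‖u‖‖x‖ ≤ ‖u‖ b
          filter_upwards [hUb'] with x hx
          calc |⟪u, x⟫| ≤ ‖u‖ * ‖x‖ := abs_real_inner_le_norm u x
            _ ≤ ‖u‖ * b := mul_le_mul_of_nonneg_left hx (norm_nonneg _)
        have hnormsq_int : Integrable (fun x : E => ‖x‖ ^ 2) νU := by
          refine integrable_of_ae_bound (b ^ 2)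
            ((continuous_norm.pow 2).measurable).aestronglyMeasurable ?_
          filter_upwards [hUb'] with x hx
          have h0 : (0:ℝ) ≤ ‖x‖ := norm_nonneg _
          rw [abs_pow, abs_of_nonneg h0]
          nlinarith
        have e2 : ∫ x, ‖u + x‖ ^ 2 ∂νU
            = ‖u‖ ^ 2 + 2 * (∫ x, ⟪u, x⟫ ∂νU) + ∫ x, ‖x‖ ^ 2 ∂νU := by
          have ic : Integrable (fun _x : E => ‖u‖ ^ 2) νU := integrable_const _
          have ia : Integrable (fun x : E => ‖u‖ ^ 2 + 2 * ⟪u, x⟫) νU :=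
            ic.add (hinner_int.const_mul 2)
          rw [integral_congr_ae (Filter.Eventually.of_forall hexp),
            integral_add ia hnormsq_int, integral_add ic (hinner_int.const_mul 2),
            integral_const, integral_const_mul]
          simp [measure_univ]
        have e3 : ∫ x, ⟪u, x⟫ ∂νU = 0 := by
          rw [integral_inner hid_int u, hmean']
          simp
        have e4 : ∫ x, ‖x‖ ^ 2 ∂νU ≤ v := by
          have : ∫ x, ‖x‖ ^ 2 ∂νU = ∫ ω, ‖X i ω‖ ^ 2 ∂μ := by
            simp only [hνU]
            exact integral_map hUmeas.aemeasurable
              ((continuous_norm.pow 2).measurable).aestronglyMeasurable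
          rw [this]; exact hvar i
        rw [e2, e3]
        linarith
      rw [hfub]
      have hcard : ((insert i s).card : ℝ) = (s.card : ℝ) + 1 := by
        rw [Finset.card_insert_of_notMem hi]; push_cast; ring
      calc ∫ x, ∫ y, χ x y ∂νV ∂νU
          ≤ ∫ x, (‖u + x‖ ^ 2 + s.card * v) ∂νU :=
            integral_mono_ae int1 int2 (Filter.Eventually.of_forall hinner)
        _ = (∫ x, ‖u + x‖ ^ 2 ∂νU) + s.card * v := by
            have hc : Continuous fun x : E => ‖u + x‖ ^ 2 :=
              ((continuous_const.add continuous_id).norm).pow 2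
            have hint : Integrable (fun x : E => ‖u + x‖ ^ 2) νU := by
              refine integrable_of_ae_bound ((‖u‖ + b) ^ 2)
                hc.measurable.aestronglyMeasurable ?_
              filter_upwards [hUb'] with x hx
              have h1 : ‖u + x‖ ≤ ‖u‖ + b := by have := norm_add_le u x; linarith
              have h0 : (0:ℝ) ≤ ‖u + x‖ := norm_nonneg _
              rw [abs_pow, abs_of_nonneg h0]
              nlinarith
            rw [integral_add hint (integrable_const _), integral_const]
            simp [measure_univ]
        _ ≤ (‖u‖ ^ 2 + v) + s.card * v := by linarith [hsq]
        _ = ‖u‖ ^ 2 + (insert i s).card * v := by rw [hcard]; ring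

end Core

lemma lambda_choice {nR v b t : ℝ} (hn : 1 ≤ nR) (hv : 0 ≤ v) (hb : 0 < b) (ht : 0 < t) :
    ∃ l : ℝ, 0 ≤ l ∧ l * (2 * b) ≤ 2 ∧
      2 * nR * l ^ 2 * v - l * (Real.sqrt (8 * nR * v * t) + (4 * b / 3) * t) ≤ -t := by
  have hnR0 : 0 < nR := lt_of_lt_of_le one_pos hn
  have h8 : (0:ℝ) ≤ 8 * nR * v * t := by positivity
  obtain ⟨q, hgen, hq0, hq2⟩ : ∃ q : ℝ, Real.sqrt (8 * nR * v * t) = q ∧ 0 ≤ q ∧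
      q ^ 2 = 8 * nR * v * t := ⟨_, rfl, Real.sqrt_nonneg _, Real.sq_sqrt h8⟩
  rw [hgen]
  have hbt : (0:ℝ) < b * t := mul_pos hb ht
  have hr0 : (0:ℝ) < q + (4 * b / 3) * t := by nlinarith
  rcases le_or_gt (2 * b * (q + (4 * b / 3) * t)) (8 * nR * v) with hca | hcb
  · -- small deviation case
    have h8' : (0:ℝ) < 8 * nR * v := lt_of_lt_of_le (by nlinarith) hca
    have hvpos : 0 < v := by nlinarith
    have hnv : 0 < nR * v := by positivity
    refine ⟨(q + (4 * b / 3) * t) / (4 * (nR * v)), by positivity, ?_, ?_⟩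
    · rw [div_mul_eq_mul_div, div_le_iff₀ (by positivity)]
      nlinarith
    · have key : 2 * nR * ((q + (4 * b / 3) * t) / (4 * (nR * v))) ^ 2 * v
          - ((q + (4 * b / 3) * t) / (4 * (nR * v))) * (q + (4 * b / 3) * t)
          = -((q + (4 * b / 3) * t) ^ 2 / (8 * (nR * v))) := by
        field_simp
        ring
      rw [key, neg_le_neg_iff, le_div_iff₀ (by positivity)]
      nlinarith
  · -- large deviation case
    have hb2 : (0:ℝ) < b ^ 2 := by positivity
    have hkey : 2 * nR * (1 / b) ^ 2 * v - (1 / b) * (q + (4 * b / 3) * t)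
        = (2 * (nR * v) - b * (q + (4 * b / 3) * t)) / b ^ 2 := by
      field_simp
    refine ⟨1 / b, by positivity, le_of_eq (by field_simp), ?_⟩
    rw [hkey, div_le_iff₀ hb2]
    rcases le_or_gt (b ^ 2 * t / 18) (nR * v) with hB1 | hB2
    · have hq_ge : (2 / 3) * b * t ≤ q := by nlinarith
      nlinarith
    · nlinarith

/-- vector Bernstein inequality (Hsu–Kakade–Zhang).  For
independent mean-zero vectors in `ℝᵖ` with `‖Xᵢ‖ ≤ K√p` a.s. and
`E‖Xᵢ‖² ≤ Up`, with probability at least `1 − 1/n`,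
`‖n⁻¹ Σᵢ Xᵢ‖ ≤ √(Up/n) + √(8Up log n/n) + 4K√p log n/(3n)`. -/
theorem vector_bernstein {Ω : Type*} [MeasurableSpace Ω]
    (μ : Measure Ω) [IsProbabilityMeasure μ] (n p : ℕ) (hn : 0 < n) (hp : 0 < p)
    (K U : ℝ) (hK : 0 ≤ K) (hU : 0 ≤ U)
    (X : Fin n → Ω → EuclideanSpace ℝ (Fin p))
    (hmeas : ∀ i, Measurable (X i))
    (hindep : iIndepFun X μ)
    (hmean : ∀ i, ∫ ω, X i ω ∂μ = 0)
    (hbdd : ∀ i, ∀ᵐ ω ∂μ, ‖X i ω‖ ≤ K * Real.sqrt p)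
    (hvar : ∀ i, ∫ ω, ‖X i ω‖ ^ 2 ∂μ ≤ U * p) :
    1 - 1 / (n : ℝ≥0∞) ≤
      μ {ω | ‖((n : ℝ))⁻¹ • ∑ i, X i ω‖ ≤
        Real.sqrt (U * p / n) + Real.sqrt (8 * U * p * Real.log n / n) +
          4 * K * Real.sqrt p * Real.log n / (3 * n)} := by
  classical
  have npos : (0:ℝ) < n := by exact_mod_cast hn
  have hn1 : (1:ℝ) ≤ n := by exact_mod_cast hn
  have hppos : (0:ℝ) < p := by exact_mod_cast hp
  have hlog0 : 0 ≤ Real.log n := Real.log_nonneg hn1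
  set b : ℝ := K * Real.sqrt p with hbdef
  set v : ℝ := U * p with hvdef
  have hb0 : 0 ≤ b := by positivity
  have hv0 : 0 ≤ v := by rw [hvdef]; positivity
  set R : ℝ := Real.sqrt (v / n) + Real.sqrt (8 * v * Real.log n / n) +
      4 * K * Real.sqrt p * Real.log n / (3 * n) with hRdef
  have hgoal_set : {ω | ‖((n : ℝ))⁻¹ • ∑ i, X i ω‖ ≤
      Real.sqrt (U * p / n) + Real.sqrt (8 * U * p * Real.log n / n) +
        4 * K * Real.sqrt p * Real.log n / (3 * n)}
      = {ω | ‖((n : ℝ))⁻¹ • ∑ i, X i ω‖ ≤ R} := by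
    have e : 8 * U * p * Real.log n = 8 * v * Real.log n := by rw [hvdef]; ring
    rw [hRdef, hvdef, e]
  rw [hgoal_set]
  have hSmeas : Measurable fun ω => ∑ i, X i ω :=
    Finset.measurable_sum _ (fun i _ => hmeas i)
  have hGmeas : MeasurableSet {ω | ‖((n : ℝ))⁻¹ • ∑ i, X i ω‖ ≤ R} :=
    measurableSet_le ((hSmeas.const_smul ((n:ℝ)⁻¹)).norm) measurable_const
  have hR0 : 0 ≤ R := by
    rw [hRdef]
    have h1 : 0 ≤ Real.sqrt (v / n) := Real.sqrt_nonneg _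
    have h2 : 0 ≤ Real.sqrt (8 * v * Real.log n / n) := Real.sqrt_nonneg _
    have h3 : 0 ≤ 4 * K * Real.sqrt p * Real.log n / (3 * n) := by positivity
    linarith
  suffices hcompl : μ {ω | ‖((n : ℝ))⁻¹ • ∑ i, X i ω‖ ≤ R}ᶜ ≤ 1 / (n : ℝ≥0∞) by
    have hadd := measure_add_measure_compl (μ := μ) hGmeas
    rw [measure_univ] at hadd
    rw [tsub_le_iff_right]
    calc (1 : ℝ≥0∞) = μ {ω | ‖((n : ℝ))⁻¹ • ∑ i, X i ω‖ ≤ R}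
        + μ {ω | ‖((n : ℝ))⁻¹ • ∑ i, X i ω‖ ≤ R}ᶜ := hadd.symm
      _ ≤ μ {ω | ‖((n : ℝ))⁻¹ • ∑ i, X i ω‖ ≤ R} + 1 / (n : ℝ≥0∞) :=
          add_le_add_right hcompl _
  -- trivial case n = 1
  rcases Nat.lt_or_ge n 2 with h2 | h2
  · have hn1' : n = 1 := by omega
    subst hn1'
    calc μ _ ≤ 1 := prob_le_one
      _ = 1 / ((1:ℕ) : ℝ≥0∞) := by simp
  -- trivial case K = 0
  rcases eq_or_lt_of_le hK with hK0 | hKpos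
  · have hz : ∀ i, ∀ᵐ ω ∂μ, X i ω = 0 := by
      intro i
      filter_upwards [hbdd i] with ω hω
      rw [hbdef, ← hK0, zero_mul] at hω
      exact norm_le_zero_iff.mp hω
    have hae : ∀ᵐ ω ∂μ, ‖((n : ℝ))⁻¹ • ∑ i, X i ω‖ ≤ R := by
      have hall : ∀ᵐ ω ∂μ, ∀ i, X i ω = 0 := ae_all_iff.mpr hz
      filter_upwards [hall] with ω hω
      simp [hω, hR0]
    have : μ {ω | ‖((n : ℝ))⁻¹ • ∑ i, X i ω‖ ≤ R}ᶜ = 0 := by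
      rw [Set.compl_setOf]
      exact (ae_iff.mp hae)
    rw [this]
    exact zero_le
  -- main case
  have hbpos : 0 < b := by rw [hbdef]; positivity
  have ht : 0 < Real.log n := Real.log_pos (by exact_mod_cast h2)
  set t : ℝ := Real.log n with htdef
  obtain ⟨l, hl0, hlb, hle⟩ := lambda_choice (nR := (n:ℝ)) hn1 hv0 hbpos ht
  set r : ℝ := Real.sqrt (8 * (n:ℝ) * v * t) + (4 * b / 3) * t with hrdef
  have hr0 : 0 ≤ r := by
    rw [hrdef]
    have := Real.sqrt_nonneg (8 * (n:ℝ) * v * t)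
    nlinarith [hbpos, ht.le]
  -- mean bound
  have hSb : ∀ᵐ ω ∂μ, ‖∑ i, X i ω‖ ≤ (n:ℝ) * b := by
    have := sum_ae_bound hbdd (Finset.univ : Finset (Fin n))
    simpa using this
  have hSint : Integrable (fun ω => ‖∑ i, X i ω‖) μ := by
    refine integrable_of_ae_bound ((n:ℝ) * b) hSmeas.norm.aestronglyMeasurable ?_
    filter_upwards [hSb] with ω hω
    rwa [abs_of_nonneg (norm_nonneg _)]
  have hSsqint : Integrable (fun ω => ‖∑ i, X i ω‖ ^ 2) μ := by
    refine integrable_of_ae_bound (((n:ℝ) * b) ^ 2)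
      ((hSmeas.norm.pow_const 2).aestronglyMeasurable) ?_
    filter_upwards [hSb] with ω hω
    have h0 : (0:ℝ) ≤ ‖∑ i, X i ω‖ := norm_nonneg _
    rw [abs_pow, abs_of_nonneg h0]
    nlinarith
  have hQ : ∫ ω, ‖∑ i, X i ω‖ ^ 2 ∂μ ≤ (n:ℝ) * v := by
    have h := sq_key hindep hmeas hbdd hmean hvar hb0 Finset.univ (0 : EuclideanSpace ℝ (Fin p))
    simpa using h
  have hM0 : 0 ≤ ∫ ω, ‖∑ i, X i ω‖ ∂μ := integral_nonneg fun ω => norm_nonneg _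
  have hMle : ∫ ω, ‖∑ i, X i ω‖ ∂μ ≤ Real.sqrt ((n:ℝ) * v) := by
    have hsq := sq_integral_le hSint hSsqint
    have h1 : (∫ ω, ‖∑ i, X i ω‖ ∂μ) ^ 2 ≤ (n:ℝ) * v := hsq.trans hQ
    have h2 := Real.sqrt_le_sqrt h1
    rwa [Real.sqrt_sq hM0] at h2
  set Mtot : ℝ := ∫ ω, ‖∑ i, X i ω‖ ∂μ with hMdef
  -- Chernoff bound
  have hexpkey : ∫ ω, Real.exp (l * ‖∑ i, X i ω‖) ∂μ
      ≤ Real.exp (l * Mtot + 2 * (n:ℝ) * l ^ 2 * v) := by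
    have h := exp_key hindep hmeas hbdd hvar hb0 hl0 hlb Finset.univ
      (0 : EuclideanSpace ℝ (Fin p))
    simpa using h
  have hfi : Integrable (fun ω => Real.exp (l * ‖∑ i, X i ω‖)) μ := by
    refine integrable_of_ae_bound (Real.exp (l * ((n:ℝ) * b)))
      ((Real.continuous_exp.measurable.comp (hSmeas.norm.const_mul l)
        ).aestronglyMeasurable) ?_
    filter_upwards [hSb] with ω hω
    rw [abs_of_nonneg (Real.exp_nonneg _)]
    exact Real.exp_le_exp.mpr (mul_le_mul_of_nonneg_left hω hl0)
  have hε : 0 < Real.exp (l * (Mtot + r)) := Real.exp_pos _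
  have hmar := mul_meas_ge_le_integral_of_nonneg
    (Filter.Eventually.of_forall fun ω => Real.exp_nonneg (l * ‖∑ i, X i ω‖)) hfi
    (Real.exp (l * (Mtot + r)))
  have hsub : {ω | Mtot + r < ‖∑ i, X i ω‖}
      ⊆ {ω | Real.exp (l * (Mtot + r)) ≤ Real.exp (l * ‖∑ i, X i ω‖)} := by
    intro ω h
    exact Real.exp_le_exp.mpr (mul_le_mul_of_nonneg_left (le_of_lt h) hl0)
  have hbadR : (μ {ω | Mtot + r < ‖∑ i, X i ω‖}).toReal
      ≤ Real.exp (2 * (n:ℝ) * l ^ 2 * v - l * r) := by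
    have h1 : (μ {ω | Mtot + r < ‖∑ i, X i ω‖}).toReal
        ≤ (μ {ω | Real.exp (l * (Mtot + r)) ≤ Real.exp (l * ‖∑ i, X i ω‖)}).toReal :=
      ENNReal.toReal_mono (measure_ne_top _ _) (measure_mono hsub)
    have h2 : (μ {ω | Real.exp (l * (Mtot + r)) ≤ Real.exp (l * ‖∑ i, X i ω‖)}).toReal
        ≤ (∫ ω, Real.exp (l * ‖∑ i, X i ω‖) ∂μ) / Real.exp (l * (Mtot + r)) := by
      rw [le_div_iff₀ hε]
      calc _ ≤ Real.exp (l * (Mtot + r))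
            * (μ {ω | Real.exp (l * (Mtot + r)) ≤ Real.exp (l * ‖∑ i, X i ω‖)}).toReal := by
            rw [mul_comm]
        _ ≤ _ := hmar
    have h3 : (∫ ω, Real.exp (l * ‖∑ i, X i ω‖) ∂μ) / Real.exp (l * (Mtot + r))
        ≤ Real.exp (l * Mtot + 2 * (n:ℝ) * l ^ 2 * v) / Real.exp (l * (Mtot + r)) := by
      gcongr
    have h4 : Real.exp (l * Mtot + 2 * (n:ℝ) * l ^ 2 * v) / Real.exp (l * (Mtot + r))
        = Real.exp (2 * (n:ℝ) * l ^ 2 * v - l * r) := by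
      rw [← Real.exp_sub]
      congr 1
      ring
    calc (μ {ω | Mtot + r < ‖∑ i, X i ω‖}).toReal ≤ _ := h1
      _ ≤ _ := h2
      _ ≤ _ := h3
      _ = _ := h4
  have hbad : μ {ω | Mtot + r < ‖∑ i, X i ω‖} ≤ 1 / (n : ℝ≥0∞) := by
    have h5 : μ {ω | Mtot + r < ‖∑ i, X i ω‖}
        ≤ ENNReal.ofReal (Real.exp (2 * (n:ℝ) * l ^ 2 * v - l * r)) := by
      rw [← ENNReal.ofReal_toReal (measure_ne_top μ _)]
      exact ENNReal.ofReal_le_ofReal hbadR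
    have h6 : Real.exp (2 * (n:ℝ) * l ^ 2 * v - l * r) ≤ Real.exp (-t) := by
      refine Real.exp_le_exp.mpr ?_
      rw [hrdef]
      exact hle
    have h7 : Real.exp (-t) = ((n:ℝ))⁻¹ := by
      rw [htdef, Real.exp_neg, Real.exp_log npos]
    calc μ {ω | Mtot + r < ‖∑ i, X i ω‖}
        ≤ ENNReal.ofReal (Real.exp (2 * (n:ℝ) * l ^ 2 * v - l * r)) := h5
      _ ≤ ENNReal.ofReal (Real.exp (-t)) := ENNReal.ofReal_le_ofReal h6
      _ = ENNReal.ofReal (((n:ℝ))⁻¹) := by rw [h7]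
      _ = 1 / (n : ℝ≥0∞) := by
          rw [ENNReal.ofReal_inv_of_pos npos, ENNReal.ofReal_natCast, one_div]
  -- geometry: the complement of the good event is inside the bad event
  have hnne : (n:ℝ) ≠ 0 := ne_of_gt npos
  have hRge : (Mtot + r) / n ≤ R := by
    have e1 : Real.sqrt (v / n) = Real.sqrt ((n:ℝ) * v) / n := by
      rw [show v / (n:ℝ) = ((n:ℝ) * v) / (n:ℝ) ^ 2 by
          rw [pow_two, mul_div_mul_left _ _ hnne],
        Real.sqrt_div (by positivity), Real.sqrt_sq npos.le]
    have e2 : Real.sqrt (8 * v * t / n) = Real.sqrt (8 * (n:ℝ) * v * t) / n := by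
      rw [show 8 * v * t / (n:ℝ) = (8 * (n:ℝ) * v * t) / (n:ℝ) ^ 2 by
          rw [pow_two]; field_simp,
        Real.sqrt_div (by positivity), Real.sqrt_sq npos.le]
    have e3 : 4 * K * Real.sqrt p * t / (3 * n) = ((4 * b / 3) * t) / n := by
      rw [hbdef]; ring
    rw [hRdef, hrdef, e1, e2, e3, ← add_div, ← add_div, ← add_assoc]
    gcongr <;> linarith [hMle, Real.sqrt_nonneg (8 * (n:ℝ) * v * t)]
  have hsub2 : {ω | ‖((n : ℝ))⁻¹ • ∑ i, X i ω‖ ≤ R}ᶜ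
      ⊆ {ω | Mtot + r < ‖∑ i, X i ω‖} := by
    intro ω hω
    simp only [Set.mem_compl_iff, Set.mem_setOf_eq, not_le] at hω
    simp only [Set.mem_setOf_eq]
    by_contra hcon
    push_neg at hcon
    apply absurd hω
    push_neg
    have hnorm : ‖((n:ℝ))⁻¹ • ∑ i, X i ω‖ = (n:ℝ)⁻¹ * ‖∑ i, X i ω‖ := by
      rw [norm_smul, Real.norm_eq_abs, abs_of_nonneg (inv_nonneg.mpr npos.le)]
    rw [hnorm]
    calc (n:ℝ)⁻¹ * ‖∑ i, X i ω‖ ≤ (n:ℝ)⁻¹ * (Mtot + r) :=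
          mul_le_mul_of_nonneg_left hcon (inv_nonneg.mpr npos.le)
      _ = (Mtot + r) / n := by rw [← div_eq_inv_mul]
      _ ≤ R := hRge
  calc μ {ω | ‖((n : ℝ))⁻¹ • ∑ i, X i ω‖ ≤ R}ᶜ
      ≤ μ {ω | Mtot + r < ‖∑ i, X i ω‖} := measure_mono hsub2
    _ ≤ 1 / (n : ℝ≥0∞) := hbad
end
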